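/- arXiv:1406.5675 — 5 statements merged into one kernel-verified Lean document; each statement's English description precedes it below -/
import Mathlib

section
/- Let K be an n×n real symmetric positive semidefinite matrix, let P ∈ R^{n×c} be a column selection matrix, and set C = K P ∈ R^{n×c} and W = P^T K P ∈ R^{c×c}. Then the following three statements are equivalent: (i) rank(W) = rank(K); (ii) K = C W† C^T; (iii) K = C C† K (C†)^T C^T. -/
open Matrix BigOperators
open scoped Classical

noncomputable section

/-- `B` satisfies the four Penrose conditions for `A`. -/
def IsMoorePenrose {m n : Type*} [Fintype m] [Fintype n]
    (A : Matrix m n ℝ) (B : Matrix n m ℝ) : Prop :=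
  A * B * A = A ∧ B * A * B = B ∧ (A * B)ᵀ = A * B ∧ (B * A)ᵀ = B * A

/-- The Moore–Penrose pseudoinverse of a real matrix (defined via the unique
matrix satisfying the four Penrose conditions, which always exists). -/
def pinv {m n : Type*} [Fintype m] [Fintype n] (A : Matrix m n ℝ) : Matrix n m ℝ :=
  if h : ∃ B, IsMoorePenrose A B then h.choose else 0

/-- Squared Frobenius norm. -/
def frobSq {m n : Type*} [Fintype m] [Fintype n] (A : Matrix m n ℝ) : ℝ :=
  ∑ i, ∑ j, (A i j) ^ 2

/-- Frobenius norm. -/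
def frobNorm {m n : Type*} [Fintype m] [Fintype n] (A : Matrix m n ℝ) : ℝ :=
  Real.sqrt (frobSq A)

/-- Eigenvalues of a (hermitian) real matrix, sorted in descending order
(junk value `0` if the matrix is not hermitian). -/
def eigsDesc {n : ℕ} (A : Matrix (Fin n) (Fin n) ℝ) : Fin n → ℝ :=
  if hA : A.IsHermitian then
    fun i => hA.eigenvalues (Tuple.sort (fun j => -hA.eigenvalues j) i)
  else 0

/-- Singular values of a real matrix, sorted in descending order. -/
def svalsDesc {m n : ℕ} (A : Matrix (Fin m) (Fin n) ℝ) : Fin n → ℝ :=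
  fun i => Real.sqrt (eigsDesc (Aᵀ * A) i)

/-- Spectral norm (largest singular value). -/
def specNorm {m n : ℕ} (A : Matrix (Fin m) (Fin n) ℝ) : ℝ := ⨆ i, svalsDesc A i

/-- `Ak` is a best rank-`k` approximation of `A` in Frobenius norm. -/
def IsBestRankApprox {m n : Type*} [Fintype m] [Fintype n]
    (A Ak : Matrix m n ℝ) (k : ℕ) : Prop :=
  Ak.rank ≤ k ∧ ∀ X : Matrix m n ℝ, X.rank ≤ k → frobSq (A - Ak) ≤ frobSq (A - X)

/-- `P` is a column selection matrix: each column is a distinct standard basis vector. -/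
def IsColSelection {n c : ℕ} (P : Matrix (Fin n) (Fin c) ℝ) : Prop :=
  ∃ f : Fin c → Fin n, Function.Injective f ∧
    P = Matrix.of fun i j => if i = f j then 1 else 0

/-- Adaptive sampling probabilities for a residual matrix `B`
(uniform in the degenerate case `B = 0`). -/
def adaptP {m n : Type*} [Fintype m] [Fintype n] (B : Matrix m n ℝ) : n → ℝ :=
  fun j => if frobSq B = 0 then (Fintype.card n : ℝ)⁻¹ else (∑ i, (B i j) ^ 2) / frobSq B

/-- Uniform sampling matrix with entries `√(n/s)` at positions `(t j, j)`. -/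
def uSamp (n : ℕ) {s : ℕ} (t : Fin s → Fin n) : Matrix (Fin n) (Fin s) ℝ :=
  Matrix.of fun i j => if i = t j then Real.sqrt ((n : ℝ) / s) else 0

/-- Weighted sampling matrix with entries `1/√(s p i)` at positions `(t j, j)`. -/
def wSamp {n s : ℕ} (p : Fin n → ℝ) (t : Fin s → Fin n) : Matrix (Fin n) (Fin s) ℝ :=
  Matrix.of fun i j => if i = t j then 1 / Real.sqrt (s * p i) else 0

end

section AuxMP

open Matrix

/-- Cancellation via a Gram-matrix argument: if `(BᵀB)X = BᵀB` then `BX = B`. -/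
theorem gram_cancel {n c : Type*} [Fintype n] [Fintype c]
    (B : Matrix n c ℝ) (X : Matrix c c ℝ)
    (h : (Bᵀ * B) * X = Bᵀ * B) : B * X = B := by
  have h0 : (B * X - B)ᵀ * (B * X - B) = 0 := by
    have e : (B * X - B)ᵀ * (B * X - B)
        = Xᵀ * ((Bᵀ * B) * X) - Xᵀ * (Bᵀ * B) - ((Bᵀ * B) * X - Bᵀ * B) := by
      rw [Matrix.transpose_sub, Matrix.transpose_mul, Matrix.sub_mul,
        Matrix.mul_sub, Matrix.mul_sub]
      simp only [Matrix.mul_assoc]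
    rw [e, h]
    simp
  have h1 : (B * X - B)ᴴ * (B * X - B) = 0 := by
    rw [Matrix.conjTranspose_eq_transpose_of_trivial]; exact h0
  exact sub_eq_zero.mp (Matrix.conjTranspose_mul_self_eq_zero.mp h1)

theorem exists_mp_hermitian {n : Type*} [Fintype n] [DecidableEq n]
    {S : Matrix n n ℝ} (hS : S.IsHermitian) :
    ∃ T : Matrix n n ℝ, IsMoorePenrose S T ∧ Tᵀ = T := by
  classical
  set U : Matrix n n ℝ := (hS.eigenvectorUnitary : Matrix n n ℝ) with hU
  have hU1 : star U * U = 1 := (Matrix.mem_unitaryGroup_iff').mp hS.eigenvectorUnitary.2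
  set d : n → ℝ := hS.eigenvalues with hd
  have hSd : S = U * diagonal d * star U := by
    have h := hS.spectral_theorem
    simpa [hU, hd, RCLike.ofReal_real_eq_id] using h
  have hcan : ∀ X : Matrix n n ℝ, star U * (U * X) = X := fun X => by
    rw [← Matrix.mul_assoc, hU1, Matrix.one_mul]
  have key : ∀ e f : n → ℝ, (U * diagonal e * star U) * (U * diagonal f * star U)
      = U * (diagonal e * diagonal f) * star U := by
    intro e f
    simp only [Matrix.mul_assoc, hcan]
  have hsym : ∀ e : n → ℝ, (U * diagonal e * star U)ᵀ = U * diagonal e * star U := by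
    intro e
    rw [← Matrix.conjTranspose_eq_transpose_of_trivial]
    simp [Matrix.star_eq_conjTranspose, Matrix.conjTranspose_mul,
      Matrix.diagonal_conjTranspose, Matrix.mul_assoc]
  have hdd : ∀ g : n → ℝ, (fun i => g i * (g i)⁻¹ * g i) = g := by
    intro g; funext i
    rcases eq_or_ne (g i) 0 with h | h
    · simp [h]
    · field_simp
  refine ⟨U * diagonal (fun i => (d i)⁻¹) * star U, ⟨?_, ?_, ?_, ?_⟩, hsym _⟩
  · rw [hSd, key, Matrix.diagonal_mul_diagonal, key, Matrix.diagonal_mul_diagonal]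
    have hfix : (fun i => d i * (d i)⁻¹ * d i) = d := by
      funext i
      rcases eq_or_ne (d i) 0 with h | h
      · simp [h]
      · field_simp
    rw [hfix]
  · rw [hSd, key, Matrix.diagonal_mul_diagonal, key, Matrix.diagonal_mul_diagonal]
    have hfix : (fun i => (d i)⁻¹ * d i * (d i)⁻¹) = fun i => (d i)⁻¹ := by
      funext i
      rcases eq_or_ne (d i) 0 with h | h
      · simp [h]
      · field_simp
    rw [hfix]
  · rw [hSd, key, Matrix.diagonal_mul_diagonal]
    exact hsym _
  · rw [hSd, key, Matrix.diagonal_mul_diagonal]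
    exact hsym _

theorem exists_isMoorePenrose {m n : Type*} [Fintype m] [Fintype n] [DecidableEq n]
    (A : Matrix m n ℝ) : ∃ B, IsMoorePenrose A B := by
  classical
  have hS : (Aᵀ * A).IsHermitian := by
    have h := Matrix.isHermitian_conjTranspose_mul_self A
    rwa [Matrix.conjTranspose_eq_transpose_of_trivial] at h
  obtain ⟨T, ⟨h1, h2, h3, h4⟩, hTsym⟩ := exists_mp_hermitian hS
  set S : Matrix n n ℝ := Aᵀ * A with hSdef
  have hATS : A * (T * S) = A := by
    apply gram_cancel
    rw [← hSdef, ← Matrix.mul_assoc]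
    exact h1
  refine ⟨T * Aᵀ, ?_, ?_, ?_, ?_⟩
  · -- A * (T * Aᵀ) * A = A
    calc A * (T * Aᵀ) * A = A * (T * S) := by
          rw [hSdef]; simp only [Matrix.mul_assoc]
      _ = A := hATS
  · -- (T * Aᵀ) * A * (T * Aᵀ) = T * Aᵀ
    calc (T * Aᵀ) * A * (T * Aᵀ) = (T * S * T) * Aᵀ := by
          rw [hSdef]; simp only [Matrix.mul_assoc]
      _ = T * Aᵀ := by rw [h2]
  · -- (A * (T * Aᵀ))ᵀ = A * (T * Aᵀ)
    rw [Matrix.transpose_mul, Matrix.transpose_mul, Matrix.transpose_transpose, hTsym]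
    simp only [Matrix.mul_assoc]
  · -- ((T * Aᵀ) * A)ᵀ = (T * Aᵀ) * A
    have e : (T * Aᵀ) * A = T * S := by rw [hSdef, Matrix.mul_assoc]
    rw [e]; exact h4

theorem pinv_spec {m n : Type*} [Fintype m] [Fintype n] [DecidableEq n]
    (A : Matrix m n ℝ) : IsMoorePenrose A (pinv A) := by
  have h := exists_isMoorePenrose A
  rw [pinv, dif_pos h]
  exact h.choose_spec

theorem range_mul_le {m n k : Type*} [Fintype m] [Fintype n] [Fintype k]
    (A : Matrix m n ℝ) (B : Matrix n k ℝ) :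
    LinearMap.range (A * B).mulVecLin ≤ LinearMap.range A.mulVecLin := by
  rw [Matrix.mulVecLin_mul]
  exact LinearMap.range_comp_le_range _ _

theorem exists_factor {m n k : Type*} [Fintype m] [Fintype n] [Fintype k] [DecidableEq n]
    (X : Matrix m n ℝ) (Y : Matrix m k ℝ)
    (h : LinearMap.range X.mulVecLin ≤ LinearMap.range Y.mulVecLin) :
    ∃ Z : Matrix k n ℝ, X = Y * Z := by
  have hmem : ∀ j, X.mulVecLin (Pi.single j 1) ∈ LinearMap.range Y.mulVecLin :=
    fun j => h (LinearMap.mem_range_self X.mulVecLin (Pi.single j 1))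
  choose z hz using hmem
  refine ⟨Matrix.of fun i j => z j i, ?_⟩
  ext i j
  have hcol := congrFun (hz j) i
  simp only [Matrix.mulVecLin_apply, Matrix.mulVec_single, MulOpposite.op_one, one_smul,
    Matrix.col_apply] at hcol
  rw [Matrix.mul_apply]
  rw [← hcol]
  simp [Matrix.mulVec, dotProduct, Matrix.of_apply, mul_comm]

end AuxMP

section
open scoped MatrixOrder
theorem psd_sqrt_aux {n : ℕ} {K : Matrix (Fin n) (Fin n) ℝ} (hK : K.PosSemidef) :
    ∃ A : Matrix (Fin n) (Fin n) ℝ, Aᵀ = A ∧ K = A * A := by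
  refine ⟨CFC.sqrt K, ?_, (CFC.sqrt_mul_sqrt_self K hK.nonneg).symm⟩
  rw [← Matrix.conjTranspose_eq_transpose_of_trivial]
  exact (CFC.sqrt_nonneg K).posSemidef.isHermitian
end

/-- For an SPSD matrix `K`, a column selection matrix `P`,
`C = K P` and `W = Pᵀ K P`, the conditions (i) `rank W = rank K`,
(ii) `K = C W† Cᵀ`, (iii) `K = C C† K (C†)ᵀ Cᵀ` are equivalent. -/
theorem spsd_exact_recovery {n c : ℕ} (K : Matrix (Fin n) (Fin n) ℝ) (hK : K.PosSemidef)
    (P : Matrix (Fin n) (Fin c) ℝ) (hP : IsColSelection P)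
    (C : Matrix (Fin n) (Fin c) ℝ) (W : Matrix (Fin c) (Fin c) ℝ)
    (hC : C = K * P) (hW : W = Pᵀ * K * P) :
    (W.rank = K.rank ↔ K = C * pinv W * Cᵀ) ∧
      (W.rank = K.rank ↔ K = C * pinv C * K * (pinv C)ᵀ * Cᵀ) := by
  classical
  obtain ⟨A, hAsym, hKA⟩ := psd_sqrt_aux hK
  have hKsym : Kᵀ = K := by
    rw [← Matrix.conjTranspose_eq_transpose_of_trivial]
    exact hK.isHermitian
  set B := A * P with hBdef
  have hBt : Bᵀ = Pᵀ * A := by rw [hBdef, Matrix.transpose_mul, hAsym]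
  have hWB : W = Bᵀ * B := by
    rw [hW, hKA, hBt, hBdef]
    simp only [Matrix.mul_assoc]
  have hCB : C = A * B := by rw [hC, hKA, hBdef, Matrix.mul_assoc]
  have hCt : Cᵀ = Bᵀ * A := by rw [hCB, Matrix.transpose_mul, hAsym]
  have hrankK : K.rank = A.rank := by
    rw [hKA, show A * A = Aᵀ * A from by rw [hAsym], Matrix.rank_transpose_mul_self]
  have hrankW : W.rank = B.rank := by rw [hWB, Matrix.rank_transpose_mul_self]
  have hrankBA : B.rank ≤ A.rank := by rw [hBdef]; exact Matrix.rank_mul_le_left A P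
  have hWleK : W.rank ≤ K.rank := by rw [hrankW, hrankK]; exact hrankBA
  have hrankCB : C.rank ≤ B.rank := by rw [hCB]; exact Matrix.rank_mul_le_right A B
  have hrankCK : C.rank ≤ K.rank := by rw [hC]; exact Matrix.rank_mul_le_left K P
  obtain ⟨hV1, hV2, hV3, hV4⟩ := pinv_spec W
  set V := pinv W with hVdef
  obtain ⟨hU1, hU2, hU3, hU4⟩ := pinv_spec C
  have hBVW : B * ((V * W)) = B := by
    apply gram_cancel
    rw [← hWB, ← Matrix.mul_assoc]
    exact hV1
  -- (i) → (ii)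
  have h12 : W.rank = K.rank → K = C * pinv W * Cᵀ := by
    intro h
    have hrB : B.rank = A.rank := by rw [← hrankW, h, hrankK]
    have hle : LinearMap.range B.mulVecLin ≤ LinearMap.range A.mulVecLin := by
      rw [hBdef]; exact range_mul_le A P
    have heq : LinearMap.range B.mulVecLin = LinearMap.range A.mulVecLin :=
      Submodule.eq_of_le_of_finrank_eq hle hrB
    obtain ⟨Z, hZ⟩ := exists_factor A B heq.ge
    have key : B * (V * (Bᵀ * A)) = A := by
      rw [hZ, show Bᵀ * (B * Z) = W * Z from by rw [← Matrix.mul_assoc, ← hWB]]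
      rw [show V * (W * Z) = (V * W) * Z from (Matrix.mul_assoc _ _ _).symm]
      rw [← Matrix.mul_assoc, hBVW]
    rw [hKA, hCt, hCB, ← hVdef]
    simp only [Matrix.mul_assoc]
    rw [key]
  -- (ii) → (i)
  have h21 : K = C * pinv W * Cᵀ → W.rank = K.rank := by
    intro h
    refine le_antisymm hWleK ?_
    calc K.rank = (C * pinv W * Cᵀ).rank := by rw [← h]
      _ ≤ (C * pinv W).rank := Matrix.rank_mul_le_left _ _
      _ ≤ C.rank := Matrix.rank_mul_le_left _ _
      _ ≤ B.rank := hrankCB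
      _ = W.rank := hrankW.symm
  -- (i) → (iii)
  have h13 : W.rank = K.rank → K = C * pinv C * K * (pinv C)ᵀ * Cᵀ := by
    intro h
    have hii := h12 h
    have hrCK : C.rank = K.rank := by
      refine le_antisymm hrankCK ?_
      calc K.rank = (C * pinv W * Cᵀ).rank := by rw [← hii]
        _ ≤ (C * pinv W).rank := Matrix.rank_mul_le_left _ _
        _ ≤ C.rank := Matrix.rank_mul_le_left _ _
    have hle : LinearMap.range C.mulVecLin ≤ LinearMap.range K.mulVecLin := by
      rw [hC]; exact range_mul_le K P
    have heq : LinearMap.range C.mulVecLin = LinearMap.range K.mulVecLin :=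
      Submodule.eq_of_le_of_finrank_eq hle hrCK
    obtain ⟨Z, hZ⟩ := exists_factor K C heq.ge
    have kCU : C * pinv C * K = K := by
      rw [hZ]
      simp only [← Matrix.mul_assoc]
      rw [hU1]
    have kUC : K * (pinv C)ᵀ * Cᵀ = K := by
      rw [Matrix.mul_assoc]
      rw [show (pinv C)ᵀ * Cᵀ = (C * pinv C)ᵀ from (Matrix.transpose_mul _ _).symm]
      rw [show K * (C * pinv C)ᵀ = (C * pinv C * K)ᵀ from by
        rw [Matrix.transpose_mul (C * pinv C) K, hKsym]]
      rw [kCU, hKsym]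
    calc K = K * (pinv C)ᵀ * Cᵀ := kUC.symm
      _ = C * pinv C * K * (pinv C)ᵀ * Cᵀ := by rw [kCU]
  -- (iii) → (i)
  have h31 : K = C * pinv C * K * (pinv C)ᵀ * Cᵀ → W.rank = K.rank := by
    intro h
    refine le_antisymm hWleK ?_
    calc K.rank = (C * pinv C * K * (pinv C)ᵀ * Cᵀ).rank := by rw [← h]
      _ ≤ (C * pinv C * K * (pinv C)ᵀ).rank := Matrix.rank_mul_le_left _ _
      _ ≤ (C * pinv C * K).rank := Matrix.rank_mul_le_left _ _
      _ ≤ (C * pinv C).rank := Matrix.rank_mul_le_left _ _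
      _ ≤ C.rank := Matrix.rank_mul_le_left _ _
      _ ≤ B.rank := hrankCB
      _ = W.rank := hrankW.symm
  exact ⟨⟨h12, h21⟩, ⟨h13, h31⟩⟩
end

section
/- Let K be an n×n real symmetric positive semidefinite matrix and C̄ ∈ R^{n×c} any matrix with rank(C̄) < n. Define δ^{ss} = (tr(K) − tr(C̄† K C̄))/(n − rank(C̄)) and U^{ss} = C̄† K (C̄†)^T − δ^{ss} (C̄^T C̄)†. Then the pair (U^{ss}, δ^{ss}) is a global minimizer of the function f(U, δ) = ‖K − C̄ U C̄^T − δ I_n‖_F² over all U ∈ R^{c×c} and δ ∈ R; that is, for every U ∈ R^{c×c} and δ ∈ R, ‖K − C̄ U^{ss} C̄^T − δ^{ss} I_n‖_F² ≤ ‖K − C̄ U C̄^T − δ I_n‖_F². -/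
open Matrix BigOperators
open scoped Classical

section
variable {m n : Type*} [Fintype m] [Fintype n]

lemma conjT_eq_T (A : Matrix m n ℝ) : Aᴴ = Aᵀ := by
  ext i j; simp [Matrix.conjTranspose_apply]

lemma trmul_self_eq_zero {A : Matrix m n ℝ} (h : Aᵀ * A = 0) : A = 0 := by
  rw [← conjT_eq_T] at h
  exact Matrix.conjTranspose_mul_self_eq_zero.mp h

-- the pseudoinverse of a symmetric real matrix, via spectral theorem
noncomputable def spinv {n : Type*} [Fintype n] [DecidableEq n]
    (S : Matrix n n ℝ) (hS : S.IsHermitian) : Matrix n n ℝ :=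
  (hS.eigenvectorUnitary : Matrix n n ℝ) *
    diagonal (fun i => if hS.eigenvalues i = 0 then 0 else (hS.eigenvalues i)⁻¹) *
    (star (hS.eigenvectorUnitary : Matrix n n ℝ))

lemma spinv_spec {n : Type*} [Fintype n] [DecidableEq n]
    (S : Matrix n n ℝ) (hS : S.IsHermitian) :
    S * spinv S hS * S = S ∧ spinv S hS * S * spinv S hS = spinv S hS ∧
    (S * spinv S hS)ᵀ = S * spinv S hS ∧ (spinv S hS * S)ᵀ = spinv S hS * S ∧
    (spinv S hS)ᵀ = spinv S hS := by
  set V : Matrix n n ℝ := (hS.eigenvectorUnitary : Matrix n n ℝ) with hV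
  have hVV : V * star V = 1 := (Matrix.mem_unitaryGroup_iff).mp hS.eigenvectorUnitary.2
  have hVV' : star V * V = 1 := (Matrix.mem_unitaryGroup_iff').mp hS.eigenvectorUnitary.2
  set μ : n → ℝ := hS.eigenvalues with hμ
  have hspec : S = V * diagonal μ * star V := by
    have := hS.spectral_theorem
    simpa using this
  set d : n → ℝ := fun i => if μ i = 0 then 0 else (μ i)⁻¹ with hd
  have cancel : ∀ X : Matrix n n ℝ, star V * (V * X) = X := by
    intro X; rw [← Matrix.mul_assoc, hVV', Matrix.one_mul]
  have key : ∀ e : n → ℝ, (V * diagonal e * star V) * (V * diagonal d * star V) =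
      V * diagonal (fun i => e i * d i) * star V := by
    intro e
    simp only [Matrix.mul_assoc]
    rw [cancel, ← Matrix.mul_assoc (diagonal e) (diagonal d), diagonal_mul_diagonal]
  have key : ∀ e f : n → ℝ, (V * diagonal e * star V) * (V * diagonal f * star V) =
      V * diagonal (fun i => e i * f i) * star V := by
    intro e f
    simp only [Matrix.mul_assoc]
    rw [cancel, ← Matrix.mul_assoc (diagonal e) (diagonal f), diagonal_mul_diagonal]
  have hsymm : ∀ e : n → ℝ, (V * diagonal e * star V)ᵀ = V * diagonal e * star V := by
    intro e
    rw [← conjT_eq_T]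
    simp [conjTranspose_mul, diagonal_conjTranspose, Matrix.star_eq_conjTranspose,
      Matrix.mul_assoc, star_trivial]
  have diag_congr : ∀ f g : n → ℝ, (∀ i, f i = g i) →
      V * diagonal f * star V = V * diagonal g * star V := by
    intro f g h
    rw [funext h]
  have hsp : spinv S hS = V * diagonal d * star V := rfl
  refine ⟨?_, ?_, ?_, ?_, ?_⟩
  · rw [hsp, hspec, key, key]
    exact diag_congr _ _ (fun i => by by_cases h : μ i = 0 <;> simp [hd, h])
  · rw [hsp, hspec, key, key]
    exact diag_congr _ _ (fun i => by by_cases h : μ i = 0 <;> simp [hd, h])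
  · rw [hsp, hspec, key]
    exact hsymm _
  · rw [hsp, hspec, key]
    exact hsymm _
  · rw [hsp]
    exact hsymm _

lemma mul_Tself {A : Matrix m n ℝ} {T : Matrix n n ℝ}
    (s1 : Aᵀ * A * T * (Aᵀ * A) = Aᵀ * A) (s4 : (T * (Aᵀ * A))ᵀ = T * (Aᵀ * A)) :
    A * (T * (Aᵀ * A)) = A := by
  set S := Aᵀ * A with hSdef
  have hSsym : Sᵀ = S := by
    rw [hSdef, Matrix.transpose_mul, Matrix.transpose_transpose]
  have e2 : T * S * S = S := by
    have h' : (T * S * S)ᵀ = S := by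
      rw [Matrix.transpose_mul, s4, hSsym, ← Matrix.mul_assoc, s1]
    calc T * S * S = ((T * S * S)ᵀ)ᵀ := (Matrix.transpose_transpose _).symm
    _ = Sᵀ := by rw [h']
    _ = S := hSsym
  have t1 : Aᵀ * (A * (T * S)) = S := by
    rw [← Matrix.mul_assoc, ← hSdef, ← Matrix.mul_assoc, s1]
  have t3 : T * S * Aᵀ * (A * (T * S)) = S := by
    rw [Matrix.mul_assoc (T * S) Aᵀ (A * (T * S)), t1]; exact e2
  have hz : (A - A * (T * S))ᵀ * (A - A * (T * S)) = 0 := by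
    rw [Matrix.transpose_sub, Matrix.transpose_mul A (T * S), s4,
      Matrix.sub_mul, Matrix.mul_sub, Matrix.mul_sub, t1, t3, Matrix.mul_assoc (T*S) Aᵀ A,
      ← hSdef, e2]
    simp
  have := trmul_self_eq_zero hz
  exact (sub_eq_zero.mp this).symm

lemma mp_exists (A : Matrix m n ℝ) : ∃ B, IsMoorePenrose A B := by
  classical
  have hS : (Aᵀ * A).IsHermitian := by
    rw [← conjT_eq_T A]
    exact Matrix.isHermitian_conjTranspose_mul_self A
  set S := Aᵀ * A with hSdef
  have hSsym : Sᵀ = S := by rw [← conjT_eq_T]; exact hS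
  obtain ⟨s1, s2, s3, s4, s5⟩ := spinv_spec S hS
  set T := spinv S hS with hT
  have e1 : S * (T * S) = S := by rw [← Matrix.mul_assoc]; exact s1
  have e2 : T * S * S = S := by
    have h' : (T * S * S)ᵀ = S := by
      rw [Matrix.transpose_mul, s4, hSsym, ← Matrix.mul_assoc, s1]
    calc T * S * S = ((T * S * S)ᵀ)ᵀ := (Matrix.transpose_transpose _).symm
    _ = Sᵀ := by rw [h']
    _ = S := hSsym
  have t1 : Aᵀ * (A * (T * S)) = S := by
    rw [← Matrix.mul_assoc, ← hSdef, ← Matrix.mul_assoc, s1]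
  have t2 : T * S * Aᵀ * A = S := by
    rw [Matrix.mul_assoc (T * S) Aᵀ A, ← hSdef]; exact e2
  have t3 : T * S * Aᵀ * (A * (T * S)) = S := by
    rw [Matrix.mul_assoc (T * S) Aᵀ (A * (T * S)), t1]; exact e2
  have hz : (A - A * (T * S))ᵀ * (A - A * (T * S)) = 0 := by
    rw [Matrix.transpose_sub, Matrix.transpose_mul A (T * S), s4,
      Matrix.sub_mul, Matrix.mul_sub, Matrix.mul_sub, t1, t3, Matrix.mul_assoc (T*S) Aᵀ A,
      ← hSdef, e2]
    simp
  have hAQ : A * (T * S) = A := by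
    have := trmul_self_eq_zero hz
    exact (sub_eq_zero.mp this).symm
  refine ⟨T * Aᵀ, ?_, ?_, ?_, ?_⟩
  · rw [Matrix.mul_assoc, Matrix.mul_assoc, ← hSdef]
    exact hAQ
  · rw [Matrix.mul_assoc T Aᵀ A, ← hSdef, ← Matrix.mul_assoc, s2]
  · simp [Matrix.transpose_mul, s5, Matrix.mul_assoc]
  · rw [Matrix.mul_assoc, ← hSdef, s4]

lemma mp_transpose {A : Matrix m n ℝ} {B : Matrix n m ℝ}
    (h : IsMoorePenrose A B) : IsMoorePenrose Aᵀ Bᵀ := by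
  obtain ⟨h1, h2, h3, h4⟩ := h
  refine ⟨?_, ?_, ?_, ?_⟩
  · simp only [← Matrix.transpose_mul]
    rw [← Matrix.mul_assoc, h1]
  · simp only [← Matrix.transpose_mul]
    rw [← Matrix.mul_assoc, h2]
  · simp only [← Matrix.transpose_mul, Matrix.transpose_transpose]
    rw [h4]
  · simp only [← Matrix.transpose_mul, Matrix.transpose_transpose]
    rw [h3]

lemma mp_mul_left_eq {A : Matrix m n ℝ} {B1 B2 : Matrix n m ℝ}
    (h1 : IsMoorePenrose A B1) (h2 : IsMoorePenrose A B2) : A * B1 = A * B2 := by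
  obtain ⟨h11, h12, h13, h14⟩ := h1
  obtain ⟨h21, h22, h23, h24⟩ := h2
  calc A * B1 = (A * B1)ᵀ := h13.symm
  _ = B1ᵀ * Aᵀ := Matrix.transpose_mul _ _
  _ = B1ᵀ * (A * B2 * A)ᵀ := by rw [h21]
  _ = B1ᵀ * (Aᵀ * (A * B2)ᵀ) := by rw [Matrix.transpose_mul (A * B2) A]
  _ = (B1ᵀ * Aᵀ) * (A * B2)ᵀ := by rw [Matrix.mul_assoc]
  _ = (A * B1)ᵀ * (A * B2)ᵀ := by rw [← Matrix.transpose_mul A B1]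
  _ = (A * B1) * (A * B2) := by rw [h13, h23]
  _ = (A * B1 * A) * B2 := by simp only [Matrix.mul_assoc]
  _ = A * B2 := by rw [h11]

lemma mp_unique (A : Matrix m n ℝ) {B1 B2 : Matrix n m ℝ}
    (h1 : IsMoorePenrose A B1) (h2 : IsMoorePenrose A B2) : B1 = B2 := by
  have hAB : A * B1 = A * B2 := mp_mul_left_eq h1 h2
  have hBA : B1 * A = B2 * A := by
    have := mp_mul_left_eq (mp_transpose h1) (mp_transpose h2)
    have h' := congrArg Matrix.transpose this
    simpa [Matrix.transpose_mul] using h'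
  calc B1 = B1 * A * B1 := h1.2.1.symm
  _ = B1 * (A * B2) := by rw [Matrix.mul_assoc, hAB]
  _ = B2 * A * B2 := by rw [← Matrix.mul_assoc, hBA]
  _ = B2 := h2.2.1
lemma pinv_isMP (A : Matrix m n ℝ) : IsMoorePenrose A (pinv A) := by
  have h := mp_exists A
  rw [pinv, dif_pos h]
  exact h.choose_spec

lemma pinv_symm {S : Matrix n n ℝ} (hS : Sᵀ = S) : (pinv S)ᵀ = pinv S := by
  refine mp_unique S ?_ (pinv_isMP S)
  have h := mp_transpose (pinv_isMP S)
  rwa [hS] at h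

lemma pinv_factor (C : Matrix m n ℝ) : pinv C = pinv (Cᵀ * C) * Cᵀ := by
  have hSsym : (Cᵀ * C)ᵀ = Cᵀ * C := by
    rw [Matrix.transpose_mul, Matrix.transpose_transpose]
  obtain ⟨p1, p2, p3, p4⟩ := pinv_isMP (Cᵀ * C)
  set B : Matrix n n ℝ := pinv (Cᵀ * C) with hBdef
  have hBsym : Bᵀ = B := pinv_symm hSsym
  have hCQ : C * (B * (Cᵀ * C)) = C := by
    apply mul_Tself p1 p4
  refine mp_unique C (pinv_isMP C) ⟨?_, ?_, ?_, ?_⟩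
  · rw [Matrix.mul_assoc C (B * Cᵀ) C, Matrix.mul_assoc B Cᵀ C]
    exact hCQ
  · rw [Matrix.mul_assoc B Cᵀ C, ← Matrix.mul_assoc (B * (Cᵀ * C)) B Cᵀ, p2]
  · simp only [Matrix.transpose_mul, Matrix.transpose_transpose, hBsym, ← Matrix.mul_assoc]
  · rw [Matrix.mul_assoc B Cᵀ C]
    exact p4
end

section
variable {m n : Type*} [Fintype m] [Fintype n]

lemma trace_eq_rank {n : Type*} [Fintype n] [DecidableEq n]
    (P : Matrix n n ℝ) (hP : P * P = P) : P.trace = (P.rank : ℝ) := by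
  have hproj : LinearMap.IsProj (LinearMap.range P.mulVecLin) P.mulVecLin := by
    constructor
    · intro x; exact LinearMap.mem_range_self _ x
    · rintro x ⟨y, rfl⟩
      simp only [Matrix.mulVecLin_apply, Matrix.mulVec_mulVec, hP]
  have h := hproj.trace
  rw [LinearMap.trace_eq_matrix_trace ℝ (Pi.basisFun ℝ n)] at h
  rw [Matrix.rank]
  rw [← h]
  congr 1
  rw [LinearMap.toMatrix_eq_toMatrix', ← Matrix.toLin'_apply', LinearMap.toMatrix'_toLin']

lemma frobSq_eq_trace (A : Matrix m n ℝ) : frobSq A = (Aᵀ * A).trace := by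
  rw [frobSq, Matrix.trace]
  rw [Finset.sum_comm]
  congr 1; ext j
  simp [Matrix.mul_apply, Matrix.diag, sq]

lemma frobSq_nonneg (A : Matrix m n ℝ) : 0 ≤ frobSq A :=
  Finset.sum_nonneg fun _ _ => Finset.sum_nonneg fun _ _ => sq_nonneg _

lemma frobSq_zero : frobSq (0 : Matrix m n ℝ) = 0 := by simp [frobSq]

lemma frobSq_add (X Y : Matrix m n ℝ) :
    frobSq (X + Y) = frobSq X + 2 * (Xᵀ * Y).trace + frobSq Y := by
  simp only [frobSq_eq_trace, Matrix.transpose_add, Matrix.add_mul, Matrix.mul_add,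
    Matrix.trace_add]
  have h : (Yᵀ * X).trace = (Xᵀ * Y).trace := by
    rw [← Matrix.trace_transpose (Yᵀ * X), Matrix.transpose_mul, Matrix.transpose_transpose]
  linarith

lemma frob_split {n : Type*} [Fintype n] (P X Y : Matrix n n ℝ) (hPT : Pᵀ = P)
    (hX : P * (X * P) = X) (hY : P * (Y * P) = 0) :
    frobSq (X + Y) = frobSq X + frobSq Y := by
  have hcross : (Xᵀ * Y).trace = 0 := by
    have hXt : Xᵀ = P ᵀ * (Xᵀ * Pᵀ) := by
      conv_lhs => rw [← hX]
      simp only [Matrix.transpose_mul, Matrix.mul_assoc]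
    calc (Xᵀ * Y).trace = (Pᵀ * ((Xᵀ * Pᵀ) * Y)).trace := by
          conv_lhs => rw [hXt, Matrix.mul_assoc]
    _ = (((Xᵀ * Pᵀ) * Y) * Pᵀ).trace := Matrix.trace_mul_comm _ _
    _ = (Xᵀ * (Pᵀ * (Y * Pᵀ))).trace := by simp only [Matrix.mul_assoc]
    _ = 0 := by
        have : Pᵀ * (Y * Pᵀ) = 0 := by rw [hPT]; exact hY
        rw [this, Matrix.mul_zero, Matrix.trace_zero]
  rw [frobSq_add, hcross]
  ring

lemma quad_min {n : Type*} [Fintype n] (R Q : Matrix n n ℝ) (δ δ0 : ℝ)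
    (horth : ((R - δ0 • Q)ᵀ * Q).trace = 0) :
    frobSq (R - δ0 • Q) ≤ frobSq (R - δ • Q) := by
  have hdec : R - δ • Q = (R - δ0 • Q) + (δ0 - δ) • Q := by
    ext i j
    simp [Matrix.sub_apply, Matrix.add_apply, Matrix.smul_apply]
    ring
  rw [hdec, frobSq_add]
  have hc : ((R - δ0 • Q)ᵀ * ((δ0 - δ) • Q)).trace = 0 := by
    rw [Matrix.mul_smul, Matrix.trace_smul, horth, smul_zero]
  rw [hc]
  have := frobSq_nonneg ((δ0 - δ) • Q)
  linarith
end

lemma proj_package {n c : ℕ} (K : Matrix (Fin n) (Fin n) ℝ) (Cbar : Matrix (Fin n) (Fin c) ℝ) :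
    ∃ P : Matrix (Fin n) (Fin n) ℝ,
      P * P = P ∧ Pᵀ = P ∧ P * Cbar = Cbar ∧ Cbarᵀ * P = Cbarᵀ ∧
      Cbar * (pinv Cbar * K * (pinv Cbar)ᵀ) * Cbarᵀ = P * K * P ∧
      Cbar * pinv (Cbarᵀ * Cbar) * Cbarᵀ = P ∧
      (pinv Cbar * K * Cbar).trace = (P * K).trace ∧
      P.trace = (Cbar.rank : ℝ) := by
  obtain ⟨m1, m2, m3, m4⟩ := pinv_isMP Cbar
  refine ⟨Cbar * pinv Cbar, ?_, m3, m1, ?_, ?_, ?_, ?_, ?_⟩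
  · rw [← Matrix.mul_assoc, m1]
  · have h := congrArg Matrix.transpose m1
    rw [Matrix.transpose_mul, m3] at h
    exact h
  · simp only [Matrix.mul_assoc]
    rw [← Matrix.transpose_mul, m3]
  · rw [Matrix.mul_assoc, ← pinv_factor]
  · exact Matrix.trace_mul_cycle _ _ _
  · have hPP : (Cbar * pinv Cbar) * (Cbar * pinv Cbar) = Cbar * pinv Cbar := by
      rw [← Matrix.mul_assoc, m1]
    rw [trace_eq_rank _ hPP]
    have le1 : (Cbar * pinv Cbar).rank ≤ Cbar.rank := Matrix.rank_mul_le_left _ _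
    have le2 : Cbar.rank ≤ (Cbar * pinv Cbar).rank := by
      conv_lhs => rw [← m1]
      exact Matrix.rank_mul_le_left _ _
    rw [Nat.le_antisymm le1 le2]


/-- The pair `(Uss, δss)` is a global minimizer of
`(U, δ) ↦ ‖K − C̄ U C̄ᵀ − δ Iₙ‖_F²`. -/
theorem spectral_shifting_optimal {n c : ℕ}
    (K : Matrix (Fin n) (Fin n) ℝ) (hK : K.PosSemidef)
    (Cbar : Matrix (Fin n) (Fin c) ℝ) (hrank : Cbar.rank < n)
    (δss : ℝ) (hδss : δss = (K.trace - (pinv Cbar * K * Cbar).trace) / ((n : ℝ) - Cbar.rank))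
    (Uss : Matrix (Fin c) (Fin c) ℝ)
    (hUss : Uss = pinv Cbar * K * (pinv Cbar)ᵀ - δss • pinv (Cbarᵀ * Cbar)) :
    ∀ (U : Matrix (Fin c) (Fin c) ℝ) (δ : ℝ),
      frobSq (K - Cbar * Uss * Cbarᵀ - δss • (1 : Matrix (Fin n) (Fin n) ℝ)) ≤
        frobSq (K - Cbar * U * Cbarᵀ - δ • (1 : Matrix (Fin n) (Fin n) ℝ)) := by
  intro U δ
  obtain ⟨P, hPP, hPT, hPC, hCP, hKP, hProj, hTrc, hTrk⟩ := proj_package K Cbar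
  have hKT : Kᵀ = K := by rw [← conjT_eq_T]; exact hK.1
  have hPP' : ∀ X : Matrix (Fin n) (Fin n) ℝ, P * (P * X) = P * X := by
    intro X; rw [← Matrix.mul_assoc, hPP]
  have hPC' : ∀ X : Matrix (Fin c) (Fin n) ℝ, P * (Cbar * X) = Cbar * X := by
    intro X; rw [← Matrix.mul_assoc, hPC]
  have main : ∀ (U' : Matrix (Fin c) (Fin c) ℝ) (δ' : ℝ),
      frobSq (K - Cbar * U' * Cbarᵀ - δ' • (1 : Matrix (Fin n) (Fin n) ℝ))
        = frobSq (P * K * P - δ' • P - Cbar * U' * Cbarᵀ)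
          + frobSq (K - P * K * P - δ' • (1 - P)) := by
    intro U' δ'
    have hsum : (P * K * P - δ' • P - Cbar * U' * Cbarᵀ) + (K - P * K * P - δ' • (1 - P))
        = K - Cbar * U' * Cbarᵀ - δ' • (1 : Matrix (Fin n) (Fin n) ℝ) := by
      ext i j
      simp only [Matrix.add_apply, Matrix.sub_apply, Matrix.smul_apply, smul_eq_mul]
      ring
    rw [← hsum]
    refine frob_split P _ _ hPT ?_ ?_
    · simp only [Matrix.sub_mul, Matrix.mul_sub, Matrix.smul_mul, Matrix.mul_smul,
        Matrix.mul_assoc, hPP', hPC', hCP, hPP]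
    · simp [Matrix.sub_mul, Matrix.mul_sub, Matrix.smul_mul, Matrix.mul_smul,
        Matrix.one_mul, Matrix.mul_one, Matrix.mul_assoc, hPP', hPC', hPP]
  have hUssC : P * K * P - δss • P - Cbar * Uss * Cbarᵀ = 0 := by
    rw [hUss]
    have h0 : Cbar * (pinv Cbar * K * (pinv Cbar)ᵀ - δss • pinv (Cbarᵀ * Cbar)) * Cbarᵀ
        = P * K * P - δss • P := by
      rw [Matrix.mul_sub, Matrix.sub_mul, hKP]
      congr 1
      rw [Matrix.mul_smul, Matrix.smul_mul, hProj]
    rw [h0, sub_self]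
  have hnz : ((n : ℝ) - (Cbar.rank : ℝ)) ≠ 0 := by
    have h1 : (Cbar.rank : ℝ) < (n : ℝ) := by exact_mod_cast hrank
    linarith
  have horth : ((K - P * K * P - δss • (1 - P))ᵀ * (1 - P)).trace = 0 := by
    have e1 : (K - P * K * P - δss • ((1 : Matrix (Fin n) (Fin n) ℝ) - P))ᵀ
        = K - P * K * P - δss • (1 - P) := by
      simp only [Matrix.transpose_sub, Matrix.transpose_smul, Matrix.transpose_one,
        Matrix.transpose_mul, hPT, hKT, ← Matrix.mul_assoc]
    rw [e1]
    simp only [Matrix.sub_mul, Matrix.mul_sub, Matrix.smul_mul, Matrix.mul_one,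
      Matrix.one_mul, Matrix.mul_assoc, hPP, Matrix.trace_sub, Matrix.trace_smul,
      smul_eq_mul]
    rw [Matrix.trace_mul_comm K P, ← hTrc]
    rw [hδss]
    simp only [Matrix.trace_one]
    rw [hTrk]
    field_simp
    rw [Fintype.card_fin]; ring
  calc frobSq (K - Cbar * Uss * Cbarᵀ - δss • (1 : Matrix (Fin n) (Fin n) ℝ))
      = frobSq (P * K * P - δss • P - Cbar * Uss * Cbarᵀ)
        + frobSq (K - P * K * P - δss • (1 - P)) := main Uss δss
  _ = frobSq (K - P * K * P - δss • (1 - P)) := by rw [hUssC, frobSq_zero, zero_add]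
  _ ≤ frobSq (K - P * K * P - δ • (1 - P)) := quad_min _ _ δ δss horth
  _ ≤ frobSq (P * K * P - δ • P - Cbar * U * Cbarᵀ)
        + frobSq (K - P * K * P - δ • (1 - P)) :=
      le_add_of_nonneg_left (frobSq_nonneg _)
  _ = frobSq (K - Cbar * U * Cbarᵀ - δ • (1 : Matrix (Fin n) (Fin n) ℝ)) := (main U δ).symm
end

section
/- Let K be an n×n real symmetric positive semidefinite matrix and C̄ ∈ R^{n×c} any matrix with rank(C̄) < n. Define δ^{ss} = (tr(K) − tr(C̄† K C̄))/(n − rank(C̄)) and U^{ss} = C̄† K (C̄†)^T − δ^{ss} (C̄^T C̄)†. Then the matrix C̄ U^{ss} C̄^T + δ^{ss} I_n is symmetric positive semidefinite; moreover, if K is positive definite, then C̄ U^{ss} C̄^T + δ^{ss} I_n is positive definite. -/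
open Matrix BigOperators
open scoped Classical

lemma exists_mp_of_isHermitian {m : ℕ} {S : Matrix (Fin m) (Fin m) ℝ} (hS : S.IsHermitian) :
    ∃ B, IsMoorePenrose S B ∧ Bᵀ = B ∧ S * B = B * S := by
  set d : Fin m → ℝ := hS.eigenvalues with hd
  set U : Matrix (Fin m) (Fin m) ℝ := (hS.eigenvectorUnitary : Matrix (Fin m) (Fin m) ℝ) with hU
  have hU2 : Uᵀ * U = 1 := by
    have := (Unitary.mem_iff.mp hS.eigenvectorUnitary.2).1
    rwa [star_eq_conjTranspose, conjTranspose_eq_transpose_of_trivial] at this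
  have hA : S = U * diagonal d * Uᵀ := by
    have := hS.spectral_theorem
    rwa [Unitary.conjStarAlgAut_apply, star_eq_conjTranspose, conjTranspose_eq_transpose_of_trivial,
      RCLike.ofReal_real_eq_id] at this
  have conjmul : ∀ X Y : Matrix (Fin m) (Fin m) ℝ,
      (U * X * Uᵀ) * (U * Y * Uᵀ) = U * (X * Y) * Uᵀ := by
    intro X Y
    calc (U * X * Uᵀ) * (U * Y * Uᵀ) = U * X * (Uᵀ * U) * Y * Uᵀ := by
          simp only [Matrix.mul_assoc]
      _ = U * (X * Y) * Uᵀ := by rw [hU2]; simp only [Matrix.mul_one, Matrix.mul_assoc]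
  have conjT : ∀ X : Matrix (Fin m) (Fin m) ℝ, (U * X * Uᵀ)ᵀ = U * Xᵀ * Uᵀ := by
    intro X
    rw [Matrix.transpose_mul, Matrix.transpose_mul, Matrix.transpose_transpose,
      Matrix.mul_assoc]
  have dcongr : ∀ f g : Fin m → ℝ, (∀ i, f i = g i) →
      U * diagonal f * Uᵀ = U * diagonal g * Uᵀ := by
    intro f g h
    rw [funext h]
  refine ⟨U * diagonal (fun i => (d i)⁻¹) * Uᵀ, ⟨?_, ?_, ?_, ?_⟩, ?_, ?_⟩
  · rw [hA, conjmul, conjmul, diagonal_mul_diagonal, diagonal_mul_diagonal]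
    apply dcongr
    intro i
    rcases eq_or_ne (d i) 0 with h | h <;> field_simp
  · rw [hA, conjmul, conjmul, diagonal_mul_diagonal, diagonal_mul_diagonal]
    apply dcongr
    intro i
    rcases eq_or_ne (d i) 0 with h | h <;> field_simp
  · rw [hA, conjmul, conjT, diagonal_mul_diagonal, diagonal_transpose]
  · rw [hA, conjmul, conjT, diagonal_mul_diagonal, diagonal_transpose]
  · rw [conjT, diagonal_transpose]
  · rw [hA, conjmul, conjmul, diagonal_mul_diagonal, diagonal_mul_diagonal]
    apply dcongr
    intro i
    ring

lemma exists_mp {p q : ℕ} (A : Matrix (Fin p) (Fin q) ℝ) :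
    ∃ B, IsMoorePenrose A B := by
  have hS : (Aᵀ * A).IsHermitian := by
    unfold Matrix.IsHermitian
    rw [conjTranspose_eq_transpose_of_trivial, Matrix.transpose_mul,
      Matrix.transpose_transpose]
  obtain ⟨Sp, ⟨h1, h2, h3, h4⟩, hsym, hcomm⟩ := exists_mp_of_isHermitian hS
  set S := Aᵀ * A with hSdef
  have hA1 : S * (Sp * S) = S := by rw [← Matrix.mul_assoc, h1]
  have f : Aᵀ * (A * (Sp * S)) = S := by rw [← Matrix.mul_assoc, ← hSdef, hA1]
  have key : A * (Sp * S) = A := by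
    have hzero : (A * (Sp * S) - A)ᵀ * (A * (Sp * S) - A) = 0 := by
      rw [Matrix.transpose_sub, Matrix.transpose_mul, h4, Matrix.sub_mul,
        Matrix.mul_sub, Matrix.mul_sub]
      simp only [Matrix.mul_assoc]
      rw [f, ← hSdef]
      simp only [← Matrix.mul_assoc]
      abel
    have := Matrix.conjTranspose_mul_self_eq_zero (A := A * (Sp * S) - A)
    rw [conjTranspose_eq_transpose_of_trivial] at this
    have h0 := this.mp hzero
    have := sub_eq_zero.mp h0
    exact this
  refine ⟨Sp * Aᵀ, ?_, ?_, ?_, ?_⟩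
  · calc A * (Sp * Aᵀ) * A = A * (Sp * (Aᵀ * A)) := by simp only [Matrix.mul_assoc]
      _ = A := by rw [← hSdef, key]
  · calc Sp * Aᵀ * A * (Sp * Aᵀ) = (Sp * S * Sp) * Aᵀ := by
          rw [hSdef]; simp only [Matrix.mul_assoc]
      _ = Sp * Aᵀ := by rw [h2]
  · calc (A * (Sp * Aᵀ))ᵀ = A * Spᵀ * Aᵀ := by
          rw [Matrix.transpose_mul, Matrix.transpose_mul, Matrix.transpose_transpose,
            Matrix.mul_assoc]
      _ = A * (Sp * Aᵀ) := by rw [hsym, Matrix.mul_assoc]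
  · calc (Sp * Aᵀ * A)ᵀ = (Sp * S)ᵀ := by rw [Matrix.mul_assoc, ← hSdef]
      _ = Sp * Aᵀ * A := by rw [h4, hSdef, Matrix.mul_assoc]

lemma mp_unique_s4 {m n : Type*} [Fintype m] [Fintype n] {A : Matrix m n ℝ}
    {B B' : Matrix n m ℝ} (hB : IsMoorePenrose A B) (hB' : IsMoorePenrose A B') :
    B = B' := by
  obtain ⟨b1, b2, b3, b4⟩ := hB
  obtain ⟨c1, c2, c3, c4⟩ := hB'
  have e2 : A * B = (A * B) * (A * B') := by
    have h : A * B = (A * B') * (A * B) := by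
      calc A * B = A * B' * A * B := by rw [c1]
        _ = (A * B') * (A * B) := by rw [Matrix.mul_assoc]
    calc A * B = (A * B)ᵀ := b3.symm
      _ = ((A * B') * (A * B))ᵀ := by rw [← h]
      _ = (A * B)ᵀ * (A * B')ᵀ := by rw [Matrix.transpose_mul]
      _ = (A * B) * (A * B') := by rw [b3, c3]
  have e3 : A * B' = (A * B) * (A * B') := by
    calc A * B' = A * B * A * B' := by rw [b1]
      _ = (A * B) * (A * B') := by rw [Matrix.mul_assoc]
  have hab : A * B = A * B' := e2.trans e3.symm
  have e2' : B * A = (B' * A) * (B * A) := by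
    have h : B * A = (B * A) * (B' * A) := by
      calc B * A = B * (A * B' * A) := by rw [c1]
        _ = (B * A) * (B' * A) := by simp only [Matrix.mul_assoc]
    calc B * A = (B * A)ᵀ := b4.symm
      _ = ((B * A) * (B' * A))ᵀ := by rw [← h]
      _ = (B' * A)ᵀ * (B * A)ᵀ := by rw [Matrix.transpose_mul]
      _ = (B' * A) * (B * A) := by rw [b4, c4]
  have e3' : B' * A = (B' * A) * (B * A) := by
    calc B' * A = B' * (A * B * A) := by rw [b1]
      _ = (B' * A) * (B * A) := by simp only [Matrix.mul_assoc]
  have hba : B * A = B' * A := e2'.trans e3'.symm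
  calc B = B * A * B := b2.symm
    _ = B' * A * B := by rw [hba]
    _ = B' * (A * B') := by rw [Matrix.mul_assoc, hab]
    _ = B' := by rw [← Matrix.mul_assoc, c2]

lemma pinv_isMP_s4 {p q : ℕ} (A : Matrix (Fin p) (Fin q) ℝ) : IsMoorePenrose A (pinv A) := by
  rw [pinv, dif_pos (exists_mp A)]
  exact (exists_mp A).choose_spec

lemma pinv_eq {p q : ℕ} {A : Matrix (Fin p) (Fin q) ℝ} {B : Matrix (Fin q) (Fin p) ℝ}
    (h : IsMoorePenrose A B) : pinv A = B :=
  mp_unique_s4 (pinv_isMP_s4 A) h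


lemma conj_form {n : ℕ} (K X : Matrix (Fin n) (Fin n) ℝ) (x : Fin n → ℝ) :
    x ⬝ᵥ ((Xᵀ * K * X) *ᵥ x) = (X *ᵥ x) ⬝ᵥ (K *ᵥ (X *ᵥ x)) := by
  rw [← Matrix.mulVec_mulVec, ← Matrix.mulVec_mulVec, Matrix.dotProduct_mulVec,
    Matrix.vecMul_transpose]

lemma trace_conj_form {n : ℕ} (K Q : Matrix (Fin n) (Fin n) ℝ) :
    (Qᵀ * K * Q).trace = ∑ j, (fun i => Q i j) ⬝ᵥ (K *ᵥ fun i => Q i j) := by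
  simp only [Matrix.trace, Matrix.diag, Matrix.mul_apply, Matrix.transpose_apply,
    dotProduct, Matrix.mulVec, Finset.sum_mul, Finset.mul_sum]
  refine Finset.sum_congr rfl fun j _ => ?_
  rw [Finset.sum_comm]
  exact Finset.sum_congr rfl fun a _ => Finset.sum_congr rfl fun b _ => by ring

set_option maxHeartbeats 1000000

/-- The spectral shifting approximation `C̄ Uss C̄ᵀ + δss Iₙ` is
positive semidefinite, and positive definite when `K` is. -/
theorem spectral_shifting_posSemidef {n c : ℕ}
    (K : Matrix (Fin n) (Fin n) ℝ) (hK : K.PosSemidef)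
    (Cbar : Matrix (Fin n) (Fin c) ℝ) (hrank : Cbar.rank < n)
    (δss : ℝ) (hδss : δss = (K.trace - (pinv Cbar * K * Cbar).trace) / ((n : ℝ) - Cbar.rank))
    (Uss : Matrix (Fin c) (Fin c) ℝ)
    (hUss : Uss = pinv Cbar * K * (pinv Cbar)ᵀ - δss • pinv (Cbarᵀ * Cbar)) :
    (Cbar * Uss * Cbarᵀ + δss • (1 : Matrix (Fin n) (Fin n) ℝ)).PosSemidef ∧
      (K.PosDef → (Cbar * Uss * Cbarᵀ + δss • (1 : Matrix (Fin n) (Fin n) ℝ)).PosDef) := by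
  obtain ⟨g1, g2, g3, g4⟩ := pinv_isMP_s4 Cbar
  set B := pinv Cbar with hB
  -- basic rewrite rules
  have σ1 : Bᵀ * Cbarᵀ = Cbar * B := by rw [← Matrix.transpose_mul]; exact g3
  have σ2 : Cbarᵀ * Bᵀ = B * Cbar := by rw [← Matrix.transpose_mul]; exact g4
  have ρ1 : ∀ {k : Type} (X : Matrix (Fin n) k ℝ), B * (Cbar * (B * X)) = B * X := by
    intro k X
    calc B * (Cbar * (B * X)) = (B * Cbar * B) * X := by simp only [Matrix.mul_assoc]
      _ = B * X := by rw [g2]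
  have ρ2 : ∀ {k : Type} (X : Matrix (Fin c) k ℝ), Cbar * (B * (Cbar * X)) = Cbar * X := by
    intro k X
    calc Cbar * (B * (Cbar * X)) = (Cbar * B * Cbar) * X := by simp only [Matrix.mul_assoc]
      _ = Cbar * X := by rw [g1]
  have ρ3 : ∀ {k : Type} (X : Matrix (Fin n) k ℝ), Bᵀ * (Cbarᵀ * X) = Cbar * (B * X) := by
    intro k X
    rw [← Matrix.mul_assoc, σ1, Matrix.mul_assoc]
  have ρ4 : ∀ {k : Type} (X : Matrix (Fin c) k ℝ), Cbarᵀ * (Bᵀ * X) = B * (Cbar * X) := by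
    intro k X
    rw [← Matrix.mul_assoc, σ2, Matrix.mul_assoc]
  have k3 : Cbar * B * Bᵀ = Bᵀ := by
    have h : (B * (Cbar * B))ᵀ = Bᵀ := by rw [← Matrix.mul_assoc, g2]
    rwa [Matrix.transpose_mul, g3] at h
  have ρ5 : ∀ {k : Type} (X : Matrix (Fin c) k ℝ), Cbar * (B * (Bᵀ * X)) = Bᵀ * X := by
    intro k X
    calc Cbar * (B * (Bᵀ * X)) = (Cbar * B * Bᵀ) * X := by simp only [Matrix.mul_assoc]
      _ = Bᵀ * X := by rw [k3]
  have ε1 : Cbar * (B * Cbar) = Cbar := by rw [← Matrix.mul_assoc, g1]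
  have ε2 : B * (Cbar * B) = B := by rw [← Matrix.mul_assoc, g2]
  have ε5 : Cbar * (B * Bᵀ) = Bᵀ := by rw [← Matrix.mul_assoc, k3]
  -- pinv (CᵀC) = B * Bᵀ
  have hpinvS : pinv (Cbarᵀ * Cbar) = B * Bᵀ := by
    apply pinv_eq
    refine ⟨?_, ?_, ?_, ?_⟩
    · simp only [Matrix.mul_assoc, ρ3, ρ1, ε1, ε2, ρ2]
    · simp only [Matrix.mul_assoc, ρ3, ρ1, ρ5, ε5, ε2, ρ2]
    · simp only [Matrix.transpose_mul, Matrix.transpose_transpose, Matrix.mul_assoc,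
        ρ3, ρ4, ρ1, ρ2, ρ5, σ1, σ2, ε1, ε2, ε5]
    · simp only [Matrix.transpose_mul, Matrix.transpose_transpose, Matrix.mul_assoc,
        ρ3, ρ4, ρ1, ρ2, ρ5, σ1, σ2, ε1, ε2, ε5]
  -- the sandwiched pseudoinverse is the projection
  have hsand : Cbar * pinv (Cbarᵀ * Cbar) * Cbarᵀ = Cbar * B := by
    rw [hpinvS]
    simp only [Matrix.mul_assoc, σ1, ρ2]
  set Q : Matrix (Fin n) (Fin n) ℝ := 1 - Cbar * B with hQ
  have hQsym : Qᵀ = Q := by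
    rw [hQ, Matrix.transpose_sub, Matrix.transpose_one, g3]
  have hQQ : Q * Q = Q := by
    rw [hQ]
    have h : Cbar * B * (Cbar * B) = Cbar * B := by rw [← Matrix.mul_assoc, g1]
    simp only [Matrix.sub_mul, Matrix.mul_sub, Matrix.one_mul, Matrix.mul_one, h]
    abel
  -- rewrite the matrix
  have hM : Cbar * Uss * Cbarᵀ + δss • (1 : Matrix (Fin n) (Fin n) ℝ)
      = (Cbar * B)ᵀ * K * (Cbar * B) + δss • (Qᵀ * Q) := by
    rw [hUss, Matrix.mul_sub, Matrix.sub_mul, Matrix.mul_smul, Matrix.smul_mul, hsand]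
    have e1 : Cbar * (B * K * Bᵀ) * Cbarᵀ = (Cbar * B)ᵀ * K * (Cbar * B) := by
      rw [g3]
      simp only [Matrix.mul_assoc, σ1]
    have e2 : Qᵀ * Q = 1 - Cbar * B := by rw [hQsym, hQQ, hQ]
    rw [e1, e2, smul_sub]
    abel
  -- trace identity
  have htrace : K.trace - (pinv Cbar * K * Cbar).trace = (Qᵀ * K * Q).trace := by
    have e1 : (B * K * Cbar).trace = (Cbar * B * K).trace := by
      rw [Matrix.trace_mul_comm, Matrix.mul_assoc]
    have e2 : (Qᵀ * K * Q).trace = (Q * K).trace := by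
      rw [hQsym, Matrix.trace_mul_comm, ← Matrix.mul_assoc, hQQ]
    rw [← hB, e1, e2, hQ, Matrix.sub_mul, Matrix.one_mul, Matrix.trace_sub]
  have hstar : ∀ (v : Fin n → ℝ), star v = v := fun v => funext fun i => rfl
  have hnum_nonneg : 0 ≤ K.trace - (pinv Cbar * K * Cbar).trace := by
    rw [htrace, trace_conj_form]
    refine Finset.sum_nonneg fun j _ => ?_
    have := hK.dotProduct_mulVec_nonneg (fun i => Q i j)
    rwa [hstar] at this
  have hden_pos : 0 < (n : ℝ) - Cbar.rank := by
    have : (Cbar.rank : ℝ) < n := by exact_mod_cast hrank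
    linarith
  have hδ_nonneg : 0 ≤ δss := by
    rw [hδss]; exact div_nonneg hnum_nonneg hden_pos.le
  -- form decomposition
  have hform : ∀ x : Fin n → ℝ,
      x ⬝ᵥ (((Cbar * B)ᵀ * K * (Cbar * B) + δss • (Qᵀ * Q)) *ᵥ x)
        = ((Cbar * B) *ᵥ x) ⬝ᵥ (K *ᵥ ((Cbar * B) *ᵥ x))
          + δss * ((Q *ᵥ x) ⬝ᵥ (Q *ᵥ x)) := by
    intro x
    have e2 : x ⬝ᵥ ((Qᵀ * Q) *ᵥ x) = (Q *ᵥ x) ⬝ᵥ (Q *ᵥ x) := by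
      have h1 : Qᵀ * Q = Qᵀ * 1 * Q := by rw [Matrix.mul_one]
      rw [h1, conj_form, Matrix.one_mulVec]
    rw [Matrix.add_mulVec, dotProduct_add, conj_form, Matrix.smul_mulVec,
      dotProduct_smul, e2, smul_eq_mul]
  -- hermitian
  have hKsym : Kᵀ = K := by
    have h := hK.1.eq
    rwa [conjTranspose_eq_transpose_of_trivial] at h
  have hherm : ((Cbar * B)ᵀ * K * (Cbar * B) + δss • (Qᵀ * Q)).IsHermitian := by
    unfold Matrix.IsHermitian
    rw [conjTranspose_eq_transpose_of_trivial]
    simp only [Matrix.transpose_add, Matrix.transpose_smul, Matrix.transpose_mul,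
      Matrix.transpose_transpose, hKsym, Matrix.mul_assoc]
  constructor
  · rw [hM]
    refine Matrix.PosSemidef.of_dotProduct_mulVec_nonneg hherm fun x => ?_
    rw [hstar, hform]
    have t1 := hK.dotProduct_mulVec_nonneg ((Cbar * B) *ᵥ x)
    rw [hstar] at t1
    have t2 : 0 ≤ (Q *ᵥ x) ⬝ᵥ (Q *ᵥ x) := by
      have := dotProduct_star_self_nonneg (Q *ᵥ x)
      rwa [hstar] at this
    positivity
  · intro hKpd
    have hQne : Q ≠ 0 := by
      intro h0
      rw [hQ, sub_eq_zero] at h0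
      have hle : (1 : Matrix (Fin n) (Fin n) ℝ).rank ≤ Cbar.rank := by
        rw [h0]
        exact Matrix.rank_mul_le_left Cbar B
      rw [Matrix.rank_one, Fintype.card_fin] at hle
      omega
    have hnum_pos : 0 < K.trace - (pinv Cbar * K * Cbar).trace := by
      rw [htrace, trace_conj_form]
      obtain ⟨i0, j0, hij⟩ : ∃ i j, Q i j ≠ 0 := by
        by_contra h
        push_neg at h
        exact hQne (Matrix.ext fun i j => h i j)
      refine Finset.sum_pos' (fun j _ => ?_) ⟨j0, Finset.mem_univ _, ?_⟩
      · have := hK.dotProduct_mulVec_nonneg (fun i => Q i j); rwa [hstar] at this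
      · have hcol : (fun i => Q i j0) ≠ 0 := fun h => hij (congrFun h i0)
        have := hKpd.dotProduct_mulVec_pos hcol
        rwa [hstar] at this
    have hδ_pos : 0 < δss := by rw [hδss]; exact div_pos hnum_pos hden_pos
    rw [hM]
    refine Matrix.PosDef.of_dotProduct_mulVec_pos hherm fun x hx => ?_
    rw [hstar, hform]
    rcases eq_or_ne (Q *ᵥ x) 0 with h0 | h0
    · have hPx : (Cbar * B) *ᵥ x = x := by
        have h1 : (1 - Cbar * B) *ᵥ x = 0 := by rw [← hQ]; exact h0
        rw [Matrix.sub_mulVec, Matrix.one_mulVec, sub_eq_zero] at h1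
        exact h1.symm
      rw [hPx]
      have t1 := hKpd.dotProduct_mulVec_pos hx
      rw [hstar] at t1
      have t2 : 0 ≤ (Q *ᵥ x) ⬝ᵥ (Q *ᵥ x) := by
        have := dotProduct_star_self_nonneg (Q *ᵥ x)
        rwa [hstar] at this
      nlinarith
    · have t1 := hK.dotProduct_mulVec_nonneg ((Cbar * B) *ᵥ x)
      rw [hstar] at t1
      have t2 : 0 < (Q *ᵥ x) ⬝ᵥ (Q *ᵥ x) := by
        have := dotProduct_star_self_pos_iff.mpr h0
        rwa [hstar] at this
      nlinarith
end

section
/- Let n, k, c be positive integers with k < n, let η > 0, and let P ∈ R^{n×c} be a fixed matrix such that for every n×n real symmetric matrix A, setting C = A P, one has ‖A − C C† A (C†)^T C^T‖_F² ≤ η ‖A − A_k‖_F². Let K be any n×n real symmetric positive semidefinite matrix, let δ̄ = (1/(n−k))(tr(K) − Σ_{j=1}^k σ_j(K)), set K̄ = K − δ̄ I_n, C̄ = K̄ P, and define the inexact spectral shifting approximation K̃^{iss} = C̄ C̄† K̄ (C̄†)^T C̄^T + δ̄ I_n. Then ‖K − K̃^{iss}‖_F² ≤ η ( ‖K − K_k‖_F²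 − (Σ_{i=k+1}^n λ_i(K))² / (n − k) ), where λ_1(K) ≥ … ≥ λ_n(K) are the eigenvalues of K. -/
open Matrix BigOperators
open scoped Classical

namespace Aux



lemma frobSq_eq_trace {m n : Type*} [Fintype m] [Fintype n] (A : Matrix m n ℝ) :
    frobSq A = (Aᵀ * A).trace := by
  rw [frobSq, Matrix.trace, Finset.sum_comm]
  refine Finset.sum_congr rfl fun j _ => ?_
  simp [Matrix.mul_apply, Matrix.diag, pow_two]

lemma frobSq_nonneg {m n : Type*} [Fintype m] [Fintype n] (A : Matrix m n ℝ) :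
    0 ≤ frobSq A :=
  Finset.sum_nonneg fun _ _ => Finset.sum_nonneg fun _ _ => sq_nonneg _

lemma trace_conj {n : ℕ} (U M : Matrix (Fin n) (Fin n) ℝ) (hU : Uᵀ * U = 1) :
    (U * M * Uᵀ).trace = M.trace := by
  rw [Matrix.trace_mul_comm, ← Matrix.mul_assoc, hU, Matrix.one_mul]

lemma frobSq_conj {n : ℕ} (U : Matrix (Fin n) (Fin n) ℝ) (hU : Uᵀ * U = 1)
    (e : Fin n → ℝ) : frobSq (U * Matrix.diagonal e * Uᵀ) = ∑ i, e i ^ 2 := by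
  rw [frobSq_eq_trace]
  have h1 : (U * Matrix.diagonal e * Uᵀ)ᵀ = U * Matrix.diagonal e * Uᵀ := by
    simp [Matrix.transpose_mul, Matrix.mul_assoc]
  rw [h1]
  have h2 : (U * Matrix.diagonal e * Uᵀ) * (U * Matrix.diagonal e * Uᵀ)
      = U * Matrix.diagonal (fun i => e i * e i) * Uᵀ := by
    rw [← Matrix.diagonal_mul_diagonal]
    calc U * Matrix.diagonal e * Uᵀ * (U * Matrix.diagonal e * Uᵀ)
        = U * Matrix.diagonal e * (Uᵀ * U) * Matrix.diagonal e * Uᵀ := by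
          simp only [Matrix.mul_assoc]
      _ = U * (Matrix.diagonal e * Matrix.diagonal e) * Uᵀ := by
          rw [hU]; simp only [Matrix.mul_one, Matrix.mul_assoc]
  rw [h2, trace_conj _ _ hU, Matrix.trace_diagonal]
  exact Finset.sum_congr rfl fun i _ => (pow_two _).symm

lemma frobSq_mul_idem {n : ℕ} (M Q : Matrix (Fin n) (Fin n) ℝ)
    (hQt : Qᵀ = Q) (hQ2 : Q * Q = Q) :
    frobSq (M * Q) = (Mᵀ * M * Q).trace := by
  rw [frobSq_eq_trace, Matrix.transpose_mul, hQt]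
  calc (Q * Mᵀ * (M * Q)).trace = ((Mᵀ * (M * Q)) * Q).trace := by
        rw [Matrix.mul_assoc, Matrix.trace_mul_comm]
    _ = (Mᵀ * M * Q).trace := by
        rw [Matrix.mul_assoc, Matrix.mul_assoc, Matrix.mul_assoc, hQ2]

/-- contraction: multiplying by an orthogonal projection `B * Bᵀ` decreases `frobSq`. -/
lemma frobSq_mul_proj_le {n m : ℕ} (M : Matrix (Fin n) (Fin n) ℝ)
    (B : Matrix (Fin n) (Fin m) ℝ) (hB : Bᵀ * B = 1) :
    frobSq (M * (B * Bᵀ)) ≤ frobSq M := by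
  set P : Matrix (Fin n) (Fin n) ℝ := B * Bᵀ with hP
  have hPt : Pᵀ = P := by simp [hP]
  have hP2 : P * P = P := by
    rw [hP, Matrix.mul_assoc, ← Matrix.mul_assoc Bᵀ, hB, Matrix.one_mul]
  have hQt : (1 - P)ᵀ = 1 - P := by simp [hPt]
  have hQ2 : (1 - P) * (1 - P) = 1 - P := by
    simp [Matrix.sub_mul, Matrix.mul_sub, hP2]
  have hsplit : frobSq M = frobSq (M * P) + frobSq (M * (1 - P)) := by
    rw [frobSq_mul_idem M P hPt hP2, frobSq_mul_idem M (1 - P) hQt hQ2,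
      frobSq_eq_trace, Matrix.mul_sub, Matrix.mul_one, Matrix.trace_sub]
    ring
  rw [hsplit]
  have := frobSq_nonneg (M * (1 - P))
  linarith



lemma card_filter_le (hk : k ≤ n) :
    (Finset.univ.filter (fun i : Fin n => k ≤ (i : ℕ))).card = n - k := by
  rcases Nat.eq_or_lt_of_le hk with h | h
  · have he : (Finset.univ.filter (fun i : Fin n => k ≤ (i : ℕ))) = ∅ := by
      ext i; simp; omega
    simp [he, h.symm]
  · have h1 : (Finset.univ.filter (fun i : Fin n => ¬ k ≤ (i : ℕ))) = Finset.Iio ⟨k, h⟩ := by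
      ext i
      simp [Fin.lt_def, Nat.not_le]
    have h2 := Finset.card_filter_add_card_filter_not
      (s := (Finset.univ : Finset (Fin n))) (p := fun i : Fin n => k ≤ (i : ℕ))
    rw [h1, Fin.card_Iio, Finset.card_univ, Fintype.card_fin] at h2
    simp only [Fin.val_mk] at h2
    omega

lemma comb_lemma (hk : k ≤ n) (μ c : Fin n → ℝ) (hμa : Antitone μ) (hμ0 : ∀ i, 0 ≤ μ i)
    (hc0 : ∀ i, 0 ≤ c i) (hc1 : ∀ i, c i ≤ 1) (hcs : (n : ℝ) - k ≤ ∑ i, c i) :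
    ∑ i ∈ Finset.univ.filter (fun i : Fin n => k ≤ (i : ℕ)), μ i ≤ ∑ i, μ i * c i := by
  rcases Nat.eq_or_lt_of_le hk with h | h
  · have he : (Finset.univ.filter (fun i : Fin n => k ≤ (i : ℕ))) = ∅ := by
      ext i; simp; omega
    rw [he, Finset.sum_empty]
    exact Finset.sum_nonneg fun i _ => mul_nonneg (hμ0 i) (hc0 i)
  · set t := μ ⟨k, h⟩ with ht
    have ht0 : 0 ≤ t := hμ0 _
    have key : ∀ i : Fin n, (if k ≤ (i : ℕ) then μ i else 0) + t * c i
        - (if k ≤ (i : ℕ) then t else 0) ≤ μ i * c i := by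
      intro i
      by_cases hik : k ≤ (i : ℕ)
      · simp only [if_pos hik]
        have hμt : μ i ≤ t := hμa (by simp [Fin.le_def, hik])
        nlinarith [hc1 i, hc0 i]
      · simp only [if_neg hik]
        have htμ : t ≤ μ i := hμa (by simp [Fin.le_def]; omega)
        nlinarith [hc0 i]
    have hsum := Finset.sum_le_sum (fun i (_ : i ∈ Finset.univ) => key i)
    rw [Finset.sum_sub_distrib, Finset.sum_add_distrib, ← Finset.mul_sum,
      ← Finset.sum_filter, ← Finset.sum_filter] at hsum
    have hcard : (∑ _i ∈ Finset.univ.filter (fun i : Fin n => k ≤ (i : ℕ)), t)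
        = ((n : ℝ) - k) * t := by
      rw [Finset.sum_const, card_filter_le hk, nsmul_eq_mul]
      have : ((n - k : ℕ) : ℝ) = (n : ℝ) - k := by
        push_cast [Nat.cast_sub hk]; ring
      rw [this]
    rw [hcard] at hsum
    nlinarith [hsum]





/-- Existence of an orthonormal family spanning (at least) the kernel of `X`. -/
lemma exists_kernel_onb {n k : ℕ} (X : Matrix (Fin n) (Fin n) ℝ) (hX : X.rank ≤ k) :
    ∃ (m : ℕ) (B : Matrix (Fin n) (Fin m) ℝ),
      Bᵀ * B = 1 ∧ X * B = 0 ∧ n ≤ m + k := by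
  classical
  set el : EuclideanSpace ℝ (Fin n) ≃ₗ[ℝ] (Fin n → ℝ) := WithLp.linearEquiv 2 ℝ (Fin n → ℝ)
  have hker : n ≤ Module.finrank ℝ (LinearMap.ker X.mulVecLin) + k := by
    have h1 := LinearMap.finrank_range_add_finrank_ker X.mulVecLin
    rw [Module.finrank_pi] at h1
    simp only [Fintype.card_fin] at h1
    have hr : Module.finrank ℝ (LinearMap.range X.mulVecLin) = X.rank := rfl
    omega
  set V : Submodule ℝ (Fin n → ℝ) := LinearMap.ker X.mulVecLin
  set V' : Submodule ℝ (EuclideanSpace ℝ (Fin n)) := V.comap el.toLinearMap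
  have hV'V : V' = V.map el.symm.toLinearMap := by
    rw [Submodule.map_equiv_eq_comap_symm]; simp; rfl
  have hfr : Module.finrank ℝ V' = Module.finrank ℝ V := by
    rw [hV'V]; exact LinearEquiv.finrank_map_eq _ _
  have hm : n ≤ Module.finrank ℝ V' + k := by rw [hfr]; exact hker
  set m := Module.finrank ℝ V'
  set b : OrthonormalBasis (Fin m) ℝ V' := stdOrthonormalBasis ℝ V'
  set B : Matrix (Fin n) (Fin m) ℝ := Matrix.of fun i j => ((b j : EuclideanSpace ℝ (Fin n)) i)
  refine ⟨m, B, ?_, ?_, hm⟩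
  · ext j l
    have horth := orthonormal_iff_ite.mp b.orthonormal j l
    rw [Submodule.coe_inner, PiLp.inner_apply] at horth
    simp only [RCLike.inner_apply, conj_trivial] at horth
    simp only [Matrix.mul_apply, Matrix.transpose_apply, Matrix.one_apply, B, Matrix.of_apply]
    rw [← horth]
    exact Finset.sum_congr rfl fun _ _ => mul_comm _ _
  · ext i j
    have hbj : (b j : EuclideanSpace ℝ (Fin n)) ∈ V' := (b j).2
    have : X.mulVec (el (b j : EuclideanSpace ℝ (Fin n))) = 0 := hbj
    simp only [Matrix.mul_apply, Matrix.zero_apply, B, Matrix.of_apply]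
    have := congrFun this i
    rw [Matrix.mulVec, dotProduct] at this
    simpa [WithLp.linearEquiv_apply, el, mul_comm] using this





variable {n k : ℕ} {A K : Matrix (Fin n) (Fin n) ℝ}

lemma card_filter_lt {n k : ℕ} (hk : k ≤ n) :
    (Finset.univ.filter (fun i : Fin n => (i : ℕ) < k)).card = k := by
  have h1 : (Finset.univ.filter (fun i : Fin n => (i : ℕ) < k))
      = (Finset.univ.filter (fun i : Fin n => ¬ k ≤ (i : ℕ))) := by
    ext i; simp [Nat.not_le]
  have h2 := Finset.card_filter_add_card_filter_not
    (s := (Finset.univ : Finset (Fin n))) (p := fun i : Fin n => k ≤ (i : ℕ))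
  rw [card_filter_le hk, Finset.card_univ, Fintype.card_fin] at h2
  rw [h1]
  omega

lemma rank_trunc_le {n k : ℕ} (U : Matrix (Fin n) (Fin n) ℝ) (hk : k ≤ n)
    (w : Fin n → ℝ) :
    (U * Matrix.diagonal (fun i : Fin n => if (i : ℕ) < k then w i else 0) * Uᵀ).rank ≤ k := by
  calc (U * Matrix.diagonal (fun i : Fin n => if (i : ℕ) < k then w i else 0) * Uᵀ).rank
      ≤ (U * Matrix.diagonal (fun i : Fin n => if (i : ℕ) < k then w i else 0)).rank :=
        Matrix.rank_mul_le_left _ _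
    _ ≤ (Matrix.diagonal (fun i : Fin n => if (i : ℕ) < k then w i else 0)).rank :=
        Matrix.rank_mul_le_right _ _
    _ ≤ k := by
        rw [Matrix.rank_diagonal]
        calc Fintype.card {i : Fin n // (if (i : ℕ) < k then w i else 0) ≠ 0}
            ≤ Fintype.card {i : Fin n // (i : ℕ) < k} := by
              apply Fintype.card_subtype_mono
              intro i hi
              by_contra hlt
              simp [hlt] at hi
          _ = k := by
              rw [Fintype.card_subtype]
              exact card_filter_lt hk

lemma trunc_diff {n k : ℕ} (U : Matrix (Fin n) (Fin n) ℝ) (w : Fin n → ℝ) :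
    U * Matrix.diagonal w * Uᵀ
      - U * Matrix.diagonal (fun i : Fin n => if (i : ℕ) < k then w i else 0) * Uᵀ
      = U * Matrix.diagonal (fun i : Fin n => if (i : ℕ) < k then 0 else w i) * Uᵀ := by
  rw [← Matrix.sub_mul, ← Matrix.mul_sub]
  congr 2
  rw [Matrix.diagonal_sub]
  have : (fun i : Fin n => w i - if (i : ℕ) < k then w i else 0)
      = (fun i : Fin n => if (i : ℕ) < k then 0 else w i) := by
    funext i
    by_cases h : (i : ℕ) < k <;> simp [h]
  rw [this]

lemma sum_trunc_sq {n k : ℕ} (w : Fin n → ℝ) :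
    ∑ i : Fin n, (if (i : ℕ) < k then 0 else w i) ^ 2
      = ∑ i ∈ Finset.univ.filter (fun i : Fin n => k ≤ (i : ℕ)), w i ^ 2 := by
  rw [Finset.sum_filter]
  refine Finset.sum_congr rfl fun i _ => ?_
  by_cases h : (i : ℕ) < k
  · simp [h, Nat.not_le.mpr h]
  · simp [h, Nat.not_lt.mp h]

lemma sum_castLE {n k : ℕ} (hk : k ≤ n) (f : Fin n → ℝ) :
    ∑ j : Fin k, f (Fin.castLE hk j)
      = ∑ i ∈ Finset.univ.filter (fun i : Fin n => (i : ℕ) < k), f i := by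
  refine Finset.sum_bij' (fun a _ => Fin.castLE hk a)
    (fun b hb => ⟨(b : ℕ), (Finset.mem_filter.mp hb).2⟩) ?_ ?_ ?_ ?_ ?_
  · intro a _
    simp [Fin.castLE]
  · intro b hb
    exact Finset.mem_univ _
  · intro a _
    simp
  · intro b hb
    simp
  · intro a _
    rfl



section EYLB


/-- Eckart–Young lower bound for symmetric matrices given an orthogonal diagonalization. -/
lemma eylb {n k : ℕ} (hk : k ≤ n) (U : Matrix (Fin n) (Fin n) ℝ) (hU : Uᵀ * U = 1)
    (d : Fin n → ℝ) (hd : Antitone (fun i => d i ^ 2))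
    (A X : Matrix (Fin n) (Fin n) ℝ) (hA : A = U * Matrix.diagonal d * Uᵀ)
    (hX : X.rank ≤ k) :
    ∑ i ∈ Finset.univ.filter (fun i : Fin n => k ≤ (i : ℕ)), d i ^ 2 ≤ frobSq (A - X) := by
  obtain ⟨m, B, hB, hXB, hm⟩ := exists_kernel_onb X hX
  have hU' : U * Uᵀ = 1 := mul_eq_one_comm.mp hU
  set B' : Matrix (Fin n) (Fin m) ℝ := Uᵀ * B with hB'def
  have hB't : B'ᵀ = Bᵀ * U := by simp [hB'def]
  have hB'o : B'ᵀ * B' = 1 := by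
    rw [hB't, hB'def, Matrix.mul_assoc, ← Matrix.mul_assoc U, hU', Matrix.one_mul, hB]
  set Q : Matrix (Fin n) (Fin n) ℝ := B' * B'ᵀ with hQdef
  have hQt : Qᵀ = Q := by simp [hQdef]
  have hQ2 : Q * Q = Q := by
    rw [hQdef, Matrix.mul_assoc, ← Matrix.mul_assoc B'ᵀ, hB'o, Matrix.one_mul]
  set c : Fin n → ℝ := fun i => Q i i with hcdef
  have hcQ : ∀ i, c i = ∑ j, (B' i j) ^ 2 := by
    intro i
    simp [hcdef, hQdef, Matrix.mul_apply, pow_two]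
  have hc0 : ∀ i, 0 ≤ c i := fun i => (hcQ i) ▸ Finset.sum_nonneg fun _ _ => sq_nonneg _
  have hc1 : ∀ i, c i ≤ 1 := by
    intro i
    have hq := congrFun (congrFun hQ2 i) i
    rw [Matrix.mul_apply] at hq
    have h1 : c i = ∑ l, (Q i l) ^ 2 := by
      calc c i = Q i i := rfl
        _ = ∑ j, Q i j * Q j i := hq.symm
        _ = ∑ l, (Q i l) ^ 2 := Finset.sum_congr rfl fun l _ => by
            have hs : Q l i = Q i l := by
              have h := congrFun (congrFun hQt i) l
              rw [Matrix.transpose_apply] at h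
              exact h
            rw [hs, pow_two]
    have h2 : (Q i i) ^ 2 ≤ ∑ l, (Q i l) ^ 2 :=
      Finset.single_le_sum (f := fun l => (Q i l) ^ 2) (fun l _ => sq_nonneg _)
        (Finset.mem_univ i)
    have h3 : (0:ℝ) ≤ c i := hc0 i
    have h4 : c i = Q i i := rfl
    nlinarith [h1, h2, h3, h4]
  have hcs : (n : ℝ) - k ≤ ∑ i, c i := by
    have h1 : ∑ i, c i = Q.trace := by rw [Matrix.trace]; rfl
    have h2 : Q.trace = (m : ℝ) := by
      rw [hQdef, Matrix.trace_mul_comm, hB'o, Matrix.trace_one]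
      simp
    rw [h1, h2]
    have : (n : ℝ) ≤ (m : ℝ) + k := by exact_mod_cast hm
    linarith
  have hAt : Aᵀ = A := by
    rw [hA]; simp [Matrix.transpose_mul, Matrix.mul_assoc]
  set P : Matrix (Fin n) (Fin n) ℝ := B * Bᵀ with hPdef
  have hPt : Pᵀ = P := by simp [hPdef]
  have hP2 : P * P = P := by
    rw [hPdef, Matrix.mul_assoc, ← Matrix.mul_assoc Bᵀ, hB, Matrix.one_mul]
  have hAP : frobSq (A * P) = ∑ i, d i ^ 2 * c i := by
    rw [frobSq_mul_idem A P hPt hP2, hAt]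
    have hAA : A * A = U * Matrix.diagonal (fun i => d i ^ 2) * Uᵀ := by
      rw [hA]
      calc U * Matrix.diagonal d * Uᵀ * (U * Matrix.diagonal d * Uᵀ)
          = U * Matrix.diagonal d * (Uᵀ * U) * Matrix.diagonal d * Uᵀ := by
            simp only [Matrix.mul_assoc]
        _ = U * (Matrix.diagonal d * Matrix.diagonal d) * Uᵀ := by
            rw [hU]; simp only [Matrix.mul_one, Matrix.mul_assoc]
        _ = U * Matrix.diagonal (fun i => d i ^ 2) * Uᵀ := by
            rw [Matrix.diagonal_mul_diagonal]
            have hdd : (fun i => d i * d i) = fun i => d i ^ 2 :=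
              funext fun i => (pow_two _).symm
            rw [hdd]
    rw [hAA]
    have hcyc : (U * Matrix.diagonal (fun i => d i ^ 2) * Uᵀ * P).trace
        = (Matrix.diagonal (fun i => d i ^ 2) * Q).trace := by
      have : U * Matrix.diagonal (fun i => d i ^ 2) * Uᵀ * P
          = U * (Matrix.diagonal (fun i => d i ^ 2) * (Uᵀ * P)) := by
        simp only [Matrix.mul_assoc]
      rw [this, Matrix.trace_mul_comm, Matrix.mul_assoc]
      have : Uᵀ * P * U = Q := by
        rw [hPdef, hQdef, hB'def, hB't]
        simp only [Matrix.mul_assoc]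
      rw [← this]
    rw [hcyc, Matrix.trace]
    refine Finset.sum_congr rfl fun i _ => ?_
    simp [Matrix.diag, Matrix.mul_apply, Matrix.diagonal_apply, Finset.sum_ite_eq, hcdef]
  have hXP : X * P = 0 := by
    rw [hPdef, ← Matrix.mul_assoc, hXB, Matrix.zero_mul]
  have hAXP : (A - X) * P = A * P := by
    rw [Matrix.sub_mul, hXP, sub_zero]
  calc ∑ i ∈ Finset.univ.filter (fun i : Fin n => k ≤ (i : ℕ)), d i ^ 2
      ≤ ∑ i, d i ^ 2 * c i :=
        comb_lemma hk _ c hd (fun i => sq_nonneg _) hc0 hc1 hcs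
    _ = frobSq ((A - X) * P) := by rw [hAXP, hAP]
    _ ≤ frobSq (A - X) := by rw [hPdef]; exact frobSq_mul_proj_le _ B hB


end EYLB

section Spectral
open Polynomial


variable {n : ℕ}

lemma charmatrix_eq (M : Matrix (Fin n) (Fin n) ℝ) :
    charmatrix M = Matrix.diagonal (fun _ => (X : ℝ[X])) - M.map Polynomial.C := by
  ext i j
  rw [charmatrix_apply]
  simp [Matrix.sub_apply, Matrix.map_apply]

lemma charpoly_conj (U M : Matrix (Fin n) (Fin n) ℝ) (hU : Uᵀ * U = 1) :
    (U * M * Uᵀ).charpoly = M.charpoly := by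
  have hU' : U * Uᵀ = 1 := mul_eq_one_comm.mp hU
  set C' : ℝ →+* ℝ[X] := Polynomial.C
  set U' : Matrix (Fin n) (Fin n) ℝ[X] := U.map C' with hU'def
  have hUt : Uᵀ.map C' = U'ᵀ := by ext i j; simp [Matrix.map_apply, hU'def]
  have hmul : U' * U'ᵀ = 1 := by
    rw [hU'def, ← hUt, ← Matrix.map_mul, hU', Matrix.map_one C' (map_zero C') (map_one C')]
  have hmul2 : U'ᵀ * U' = 1 := mul_eq_one_comm.mp hmul
  have hkey : charmatrix (U * M * Uᵀ) = U' * charmatrix M * U'ᵀ := by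
    rw [charmatrix_eq, charmatrix_eq, Matrix.mul_sub, Matrix.sub_mul]
    congr 1
    · have hdiag : U' * Matrix.diagonal (fun _ => (X : ℝ[X])) = (X : ℝ[X]) • U' := by
        ext i j
        simp [Matrix.mul_diagonal, mul_comm]
      have hdiag2 : ((X : ℝ[X]) • U') * U'ᵀ = (X : ℝ[X]) • (U' * U'ᵀ) := by
        rw [Matrix.smul_mul]
      rw [hdiag, hdiag2, hmul]
      ext i j
      simp [Matrix.diagonal_apply, Matrix.one_apply]
    · rw [← hUt, ← Matrix.map_mul, ← Matrix.map_mul]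
  rw [Matrix.charpoly, Matrix.charpoly, hkey, Matrix.det_mul, Matrix.det_mul]
  have : U'.det * U'ᵀ.det = 1 := by
    rw [← Matrix.det_mul, hmul, Matrix.det_one]
  calc U'.det * (charmatrix M).det * U'ᵀ.det
      = (charmatrix M).det * (U'.det * U'ᵀ.det) := by ring
    _ = (charmatrix M).det := by rw [this, mul_one]

lemma charpoly_diagonal (d : Fin n → ℝ) :
    (Matrix.diagonal d).charpoly = ∏ i, (X - Polynomial.C (d i)) := by
  rw [Matrix.charpoly_of_upperTriangular _ (Matrix.blockTriangular_diagonal d)]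
  exact Finset.prod_congr rfl fun i _ => by rw [Matrix.diagonal_apply_eq]

lemma multiset_of_prod_eq (a b : Fin n → ℝ)
    (h : ∏ i, (X - Polynomial.C (a i)) = ∏ i, (X - Polynomial.C (b i))) :
    Multiset.map a Finset.univ.val = Multiset.map b Finset.univ.val := by
  have key : ∀ f : Fin n → ℝ, (∏ i, (X - Polynomial.C (f i))).roots
      = Multiset.map f Finset.univ.val := by
    intro f
    have hm : (∏ i, (X - Polynomial.C (f i))) ≠ 0 :=
      (monic_prod_of_monic _ _ fun i _ => monic_X_sub_C _).ne_zero
    rw [Polynomial.roots_prod _ _ hm]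
    simp [Polynomial.roots_X_sub_C, Multiset.bind_singleton]
  rw [← key a, ← key b, h]

/-- Two antitone tuples with the same multiset of values are equal. -/
lemma antitone_unique {f g : Fin n → ℝ} (hf : Antitone f) (hg : Antitone g)
    (h : Multiset.map f Finset.univ.val = Multiset.map g Finset.univ.val) : f = g := by
  have hperm : (List.ofFn f).Perm (List.ofFn g) := by
    rw [Fin.univ_val_map, Fin.univ_val_map] at h
    exact Multiset.coe_eq_coe.mp (by exact_mod_cast h)
  have hsf : (List.ofFn f).Pairwise (· ≥ ·) :=
    List.pairwise_ofFn.mpr fun i j hij => hf (le_of_lt hij)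
  have hsg : (List.ofFn g).Pairwise (· ≥ ·) :=
    List.pairwise_ofFn.mpr fun i j hij => hg (le_of_lt hij)
  haveI : IsAntisymm ℝ (· ≥ ·) := ⟨fun a b h1 h2 => le_antisymm h2 h1⟩
  exact List.ofFn_injective (List.Perm.eq_of_pairwise' hsf hsg hperm)





variable {n : ℕ} {A : Matrix (Fin n) (Fin n) ℝ}

lemma eigsDesc_eq (hA : A.IsHermitian) :
    eigsDesc A = fun i => hA.eigenvalues (Tuple.sort (fun j => -hA.eigenvalues j) i) := by
  rw [eigsDesc, dif_pos hA]

lemma eigsDesc_antitone (hA : A.IsHermitian) : Antitone (eigsDesc A) := by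
  rw [eigsDesc_eq hA]
  intro i j hij
  have := Tuple.monotone_sort (fun j => -hA.eigenvalues j) hij
  simp only [Function.comp_apply] at this
  linarith

lemma eigsDesc_multiset (hA : A.IsHermitian) :
    Multiset.map (eigsDesc A) Finset.univ.val
      = Multiset.map hA.eigenvalues Finset.univ.val := by
  rw [eigsDesc_eq hA]
  have : (fun i => hA.eigenvalues (Tuple.sort (fun j => -hA.eigenvalues j) i))
      = hA.eigenvalues ∘ (Tuple.sort (fun j => -hA.eigenvalues j)) := rfl
  rw [this, ← Multiset.map_map, Multiset.map_univ_val_equiv]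

/-- real spectral theorem with transpose. -/
lemma spectral_real (hA : A.IsHermitian) :
    ∃ U : Matrix (Fin n) (Fin n) ℝ, Uᵀ * U = 1 ∧
      A = U * Matrix.diagonal hA.eigenvalues * Uᵀ := by
  refine ⟨(hA.eigenvectorUnitary : Matrix (Fin n) (Fin n) ℝ), ?_, ?_⟩
  · have h := (Matrix.mem_unitaryGroup_iff'.mp hA.eigenvectorUnitary.2)
    rw [← Matrix.conjTranspose_eq_transpose_of_trivial]
    exact h
  · have h := hA.spectral_theorem
    rw [← Matrix.conjTranspose_eq_transpose_of_trivial]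
    simpa [RCLike.ofReal_real_eq_id, Matrix.star_eq_conjTranspose] using h

lemma submatrix_conj_perm (U₀ : Matrix (Fin n) (Fin n) ℝ) (hU₀ : U₀ᵀ * U₀ = 1)
    (d : Fin n → ℝ) (ρ : Equiv.Perm (Fin n)) :
    (U₀.submatrix id ρ)ᵀ * (U₀.submatrix id ρ) = 1 ∧
      (U₀.submatrix id ρ) * Matrix.diagonal (fun i => d (ρ i)) * (U₀.submatrix id ρ)ᵀ
        = U₀ * Matrix.diagonal d * U₀ᵀ := by
  constructor
  · ext a b
    have h := congrFun (congrFun hU₀ (ρ a)) (ρ b)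
    rw [Matrix.mul_apply] at h
    rw [Matrix.mul_apply]
    simp only [Matrix.transpose_apply, Matrix.submatrix_apply, id_eq]
    simp only [Matrix.transpose_apply] at h
    rw [h]
    simp [Matrix.one_apply, EmbeddingLike.apply_eq_iff_eq]
  · ext i j
    rw [Matrix.mul_apply, Matrix.mul_apply]
    have lhs_eq : ∀ a, (U₀.submatrix id ρ * Matrix.diagonal (fun i => d (ρ i))) i a
        * (U₀.submatrix id ρ)ᵀ a j = U₀ i (ρ a) * d (ρ a) * U₀ j (ρ a) := by
      intro a
      rw [Matrix.mul_diagonal]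
      simp [Matrix.submatrix_apply]
    rw [Finset.sum_congr rfl fun a _ => lhs_eq a]
    have rhs_eq : ∀ b, (U₀ * Matrix.diagonal d) i b * U₀ᵀ b j
        = U₀ i b * d b * U₀ j b := by
      intro b
      rw [Matrix.mul_diagonal]
      simp
    rw [Finset.sum_congr rfl fun b _ => rhs_eq b]
    exact Equiv.sum_comp ρ (fun b => U₀ i b * d b * U₀ j b)

/-- sorted real spectral decomposition. -/
lemma sorted_decomp (hA : A.IsHermitian) :
    ∃ U : Matrix (Fin n) (Fin n) ℝ, Uᵀ * U = 1 ∧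
      A = U * Matrix.diagonal (eigsDesc A) * Uᵀ := by
  obtain ⟨U₀, hU₀, hdec⟩ := spectral_real hA
  set ρ := Tuple.sort (fun j => -hA.eigenvalues j)
  obtain ⟨h1, h2⟩ := submatrix_conj_perm U₀ hU₀ hA.eigenvalues ρ
  refine ⟨U₀.submatrix id ρ, h1, ?_⟩
  calc A = U₀ * Matrix.diagonal hA.eigenvalues * U₀ᵀ := hdec
    _ = (U₀.submatrix id ρ) * Matrix.diagonal (fun i => hA.eigenvalues (ρ i))
        * (U₀.submatrix id ρ)ᵀ := h2.symm
    _ = (U₀.submatrix id ρ) * Matrix.diagonal (eigsDesc A) * (U₀.submatrix id ρ)ᵀ := by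
        rw [eigsDesc_eq hA]

/-- multiset of eigenvalues from any orthogonal diagonalization. -/
lemma eig_multiset_of_decomp (hA : A.IsHermitian) (U : Matrix (Fin n) (Fin n) ℝ)
    (d : Fin n → ℝ) (hU : Uᵀ * U = 1) (hdec : A = U * Matrix.diagonal d * Uᵀ) :
    Multiset.map hA.eigenvalues Finset.univ.val = Multiset.map d Finset.univ.val := by
  obtain ⟨U₀, hU₀, hdec₀⟩ := spectral_real hA
  have h1 : A.charpoly = ∏ i, (X - Polynomial.C (hA.eigenvalues i)) := by
    conv_lhs => rw [hdec₀]
    rw [charpoly_conj _ _ hU₀, charpoly_diagonal]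
  have h2 : A.charpoly = ∏ i, (X - Polynomial.C (d i)) := by
    conv_lhs => rw [hdec]
    rw [charpoly_conj _ _ hU, charpoly_diagonal]
  exact multiset_of_prod_eq _ _ (h1.symm.trans h2)





variable {n : ℕ} {A K : Matrix (Fin n) (Fin n) ℝ}

lemma eigsDesc_nonneg (hK : K.PosSemidef) (i : Fin n) : 0 ≤ eigsDesc K i := by
  rw [eigsDesc_eq hK.1]
  exact hK.eigenvalues_nonneg _

lemma transpose_eq (hA : A.IsHermitian) : Aᵀ = A := by
  rw [← Matrix.conjTranspose_eq_transpose_of_trivial]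
  exact hA.eq

lemma trace_eq_sum_eigsDesc (hA : A.IsHermitian) : A.trace = ∑ i, eigsDesc A i := by
  obtain ⟨U, hU, hdec⟩ := sorted_decomp hA
  conv_lhs => rw [hdec]
  rw [trace_conj _ _ hU, Matrix.trace_diagonal]

lemma eigsDesc_sq (hK : K.PosSemidef) :
    eigsDesc (Kᵀ * K) = fun i => (eigsDesc K i) ^ 2 := by
  have hKt : Kᵀ = K := transpose_eq hK.1
  have h2 : (K * K).IsHermitian := by
    show (K * K)ᴴ = K * K
    rw [Matrix.conjTranspose_mul, hK.1.eq]
  have hKK : Kᵀ * K = K * K := by rw [hKt]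
  rw [hKK]
  apply antitone_unique (eigsDesc_antitone h2)
  · intro i j hij
    have h0i := eigsDesc_nonneg hK i
    have h0j := eigsDesc_nonneg hK j
    have := eigsDesc_antitone hK.1 hij
    simp only
    nlinarith
  · obtain ⟨U, hU, hdec⟩ := spectral_real hK.1
    have hdec2 : K * K = U * Matrix.diagonal (fun i => hK.1.eigenvalues i ^ 2) * Uᵀ := by
      conv_lhs => rw [hdec]
      calc U * Matrix.diagonal hK.1.eigenvalues * Uᵀ * (U * Matrix.diagonal hK.1.eigenvalues * Uᵀ)
          = U * Matrix.diagonal hK.1.eigenvalues * (Uᵀ * U) * Matrix.diagonal hK.1.eigenvalues * Uᵀ := by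
            simp only [Matrix.mul_assoc]
        _ = U * (Matrix.diagonal hK.1.eigenvalues * Matrix.diagonal hK.1.eigenvalues) * Uᵀ := by
            rw [hU]; simp only [Matrix.mul_one, Matrix.mul_assoc]
        _ = U * Matrix.diagonal (fun i => hK.1.eigenvalues i ^ 2) * Uᵀ := by
            rw [Matrix.diagonal_mul_diagonal]
            have : (fun i => hK.1.eigenvalues i * hK.1.eigenvalues i)
                = fun i => hK.1.eigenvalues i ^ 2 := funext fun i => (pow_two _).symm
            rw [this]
    calc Multiset.map (eigsDesc (K * K)) Finset.univ.val
        = Multiset.map h2.eigenvalues Finset.univ.val := eigsDesc_multiset h2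
      _ = Multiset.map (fun i => hK.1.eigenvalues i ^ 2) Finset.univ.val :=
          eig_multiset_of_decomp h2 U _ hU hdec2
      _ = Multiset.map (fun x : ℝ => x ^ 2) (Multiset.map hK.1.eigenvalues Finset.univ.val) := by
          rw [Multiset.map_map]; rfl
      _ = Multiset.map (fun x : ℝ => x ^ 2) (Multiset.map (eigsDesc K) Finset.univ.val) := by
          rw [eigsDesc_multiset hK.1]
      _ = Multiset.map (fun i => (eigsDesc K i) ^ 2) Finset.univ.val := by
          rw [Multiset.map_map]; rfl

lemma svalsDesc_eq_eigsDesc (hK : K.PosSemidef) : svalsDesc K = eigsDesc K := by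
  funext i
  rw [svalsDesc, eigsDesc_sq hK]
  exact Real.sqrt_sq (eigsDesc_nonneg hK i)


end Spectral

end Aux


/-- Error bound for the inexact spectral shifting model. -/
theorem inexact_spectral_shifting_error_bound {n k c : ℕ} (hkn : k < n)
    {η : ℝ} (hη : 0 < η)
    (P : Matrix (Fin n) (Fin c) ℝ)
    (hP : ∀ (A Ak : Matrix (Fin n) (Fin n) ℝ), A.IsSymm → IsBestRankApprox A Ak k →
        frobSq (A - (A * P) * pinv (A * P) * A * (pinv (A * P))ᵀ * (A * P)ᵀ) ≤
          η * frobSq (A - Ak))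
    (K : Matrix (Fin n) (Fin n) ℝ) (hK : K.PosSemidef)
    (δbar : ℝ)
    (hδbar : δbar = (K.trace - ∑ j : Fin k, svalsDesc K (Fin.castLE hkn.le j)) / ((n : ℝ) - k))
    (Kbar : Matrix (Fin n) (Fin n) ℝ) (hKbar : Kbar = K - δbar • (1 : Matrix (Fin n) (Fin n) ℝ))
    (Cbar : Matrix (Fin n) (Fin c) ℝ) (hCbar : Cbar = Kbar * P)
    (Ktil : Matrix (Fin n) (Fin n) ℝ)
    (hKtil : Ktil = Cbar * pinv Cbar * Kbar * (pinv Cbar)ᵀ * Cbarᵀ +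
      δbar • (1 : Matrix (Fin n) (Fin n) ℝ))
    (Kk : Matrix (Fin n) (Fin n) ℝ) (hKk : IsBestRankApprox K Kk k) :
    frobSq (K - Ktil) ≤
      η * (frobSq (K - Kk) -
        (∑ i ∈ Finset.univ.filter (fun i : Fin n => k ≤ (i : ℕ)), eigsDesc K i) ^ 2 /
          ((n : ℝ) - k)) := by
  classical
  have hkle : k ≤ n := hkn.le
  have hH : K.IsHermitian := hK.1
  set e : Fin n → ℝ := eigsDesc K with he
  set F : Finset (Fin n) := Finset.univ.filter (fun i : Fin n => k ≤ (i : ℕ)) with hF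
  set S : ℝ := ∑ i ∈ F, e i with hS
  set ν : ℝ := (n : ℝ) - (k : ℝ) with hν
  have hν0 : 0 < ν := by
    rw [hν]
    have : (k : ℝ) < (n : ℝ) := by exact_mod_cast hkn
    linarith
  have hδ : δbar = S / ν := by
    rw [hδbar]
    congr 1
    rw [Aux.trace_eq_sum_eigsDesc hH]
    have h1 : ∀ j : Fin k, svalsDesc K (Fin.castLE hkn.le j) = e (Fin.castLE hkn.le j) :=
      fun j => by rw [Aux.svalsDesc_eq_eigsDesc hK]
    rw [Finset.sum_congr rfl fun j _ => h1 j, Aux.sum_castLE hkn.le e]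
    rw [← Finset.sum_filter_add_sum_filter_not Finset.univ (fun i : Fin n => (i : ℕ) < k) e]
    have h2 : Finset.univ.filter (fun i : Fin n => ¬ (i : ℕ) < k) = F := by
      rw [hF]; ext i; simp [Nat.not_lt]
    rw [h2, ← hS]
    ring
  obtain ⟨U, hU, hdecK⟩ := Aux.sorted_decomp hH
  have hUU : U * Uᵀ = 1 := mul_eq_one_comm.mp hU
  have hsplit : U * Matrix.diagonal (fun i => e i - δbar) * Uᵀ
      = U * Matrix.diagonal e * Uᵀ - δbar • (1 : Matrix (Fin n) (Fin n) ℝ) := by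
    have hd : Matrix.diagonal (fun i => e i - δbar)
        = Matrix.diagonal e - δbar • (1 : Matrix (Fin n) (Fin n) ℝ) := by
      ext i j
      by_cases hij : i = j
      · subst hij; simp [Matrix.diagonal_apply, Matrix.one_apply]
      · simp [Matrix.diagonal_apply, hij, Matrix.one_apply]
    rw [hd, Matrix.mul_sub, Matrix.sub_mul]
    congr 1
    rw [Matrix.mul_smul, Matrix.smul_mul, Matrix.mul_one, hUU]
  have hdecKbar : Kbar = U * Matrix.diagonal (fun i => e i - δbar) * Uᵀ := by
    rw [hKbar, hsplit, ← hdecK]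
  set ρ₂ : Equiv.Perm (Fin n) := Tuple.sort (fun j => -((e j - δbar) ^ 2)) with hρ₂
  set d₂ : Fin n → ℝ := fun i => e (ρ₂ i) - δbar with hd₂
  obtain ⟨hU₂o, hU₂d⟩ := Aux.submatrix_conj_perm U hU (fun i => e i - δbar) ρ₂
  set U₂ := U.submatrix id ρ₂ with hU₂
  have hdecKbar₂ : Kbar = U₂ * Matrix.diagonal d₂ * U₂ᵀ := by
    rw [hdecKbar, ← hU₂d]
  have hd₂a : Antitone (fun i => d₂ i ^ 2) := by
    intro i j hij
    have h := Tuple.monotone_sort (fun j => -((e j - δbar) ^ 2)) hij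
    simp only [Function.comp_apply] at h
    simp only [hd₂]
    linarith
  set Akb := U₂ * Matrix.diagonal (fun i : Fin n => if (i : ℕ) < k then d₂ i else 0) * U₂ᵀ
    with hAkb
  have hAkbErr : frobSq (Kbar - Akb) = ∑ i ∈ F, d₂ i ^ 2 := by
    rw [hdecKbar₂, hAkb, Aux.trunc_diff U₂ d₂, Aux.frobSq_conj U₂ hU₂o, Aux.sum_trunc_sq, hF]
  have hAkbBest : IsBestRankApprox Kbar Akb k := by
    refine ⟨Aux.rank_trunc_le U₂ hkle d₂, fun X hX => ?_⟩
    rw [hAkbErr]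
    have := Aux.eylb hkle U₂ hU₂o d₂ hd₂a Kbar X hdecKbar₂ hX
    rw [← hF] at this
    exact this
  set X₀ := U * Matrix.diagonal (fun i : Fin n => if (i : ℕ) < k then e i - δbar else 0) * Uᵀ
    with hX₀
  have hX₀err : frobSq (Kbar - X₀) = ∑ i ∈ F, (e i - δbar) ^ 2 := by
    rw [hdecKbar, hX₀, Aux.trunc_diff U _, Aux.frobSq_conj U hU, Aux.sum_trunc_sq, hF]
  have hcomp : frobSq (Kbar - Akb) ≤ ∑ i ∈ F, (e i - δbar) ^ 2 := by
    rw [← hX₀err]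
    exact hAkbBest.2 X₀ (Aux.rank_trunc_le U hkle _)
  have hcardF : (F.card : ℝ) = ν := by
    rw [hF, Aux.card_filter_le hkle, hν]
    push_cast [Nat.cast_sub hkle]
    ring
  have halg : ∑ i ∈ F, (e i - δbar) ^ 2 = (∑ i ∈ F, e i ^ 2) - S ^ 2 / ν := by
    have expand : ∀ i, (e i - δbar) ^ 2 = e i ^ 2 - 2 * δbar * e i + δbar ^ 2 :=
      fun i => by ring
    rw [Finset.sum_congr rfl fun i _ => expand i, Finset.sum_add_distrib,
      Finset.sum_sub_distrib, ← Finset.mul_sum, Finset.sum_const, nsmul_eq_mul, hcardF, ← hS]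
    rw [hδ]
    field_simp
    ring
  have hEYK : ∑ i ∈ F, e i ^ 2 ≤ frobSq (K - Kk) := by
    have hea : Antitone (fun i => e i ^ 2) := by
      intro i j hij
      have h1 := Aux.eigsDesc_antitone hH hij
      have h2 := Aux.eigsDesc_nonneg hK j
      simp only
      nlinarith
    have := Aux.eylb hkle U hU e hea K Kk hdecK hKk.1
    rw [← hF] at this
    exact this
  have hKbarSymm : Kbar.IsSymm := by
    rw [Matrix.IsSymm, hKbar, Matrix.transpose_sub, Aux.transpose_eq hH,
      Matrix.transpose_smul, Matrix.transpose_one]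
  have hdiff : K - Ktil
      = Kbar - Kbar * P * pinv (Kbar * P) * Kbar * (pinv (Kbar * P))ᵀ * (Kbar * P)ᵀ := by
    subst hCbar
    rw [hKtil, hKbar]
    abel
  rw [hdiff]
  calc frobSq (Kbar - Kbar * P * pinv (Kbar * P) * Kbar * (pinv (Kbar * P))ᵀ * (Kbar * P)ᵀ)
      ≤ η * frobSq (Kbar - Akb) := hP Kbar Akb hKbarSymm hAkbBest
    _ ≤ η * ((∑ i ∈ F, e i ^ 2) - S ^ 2 / ν) := by
        apply mul_le_mul_of_nonneg_left _ hη.le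
        rw [← halg]
        exact hcomp
    _ ≤ η * (frobSq (K - Kk) - S ^ 2 / ν) := by
        apply mul_le_mul_of_nonneg_left _ hη.le
        have h := hEYK
        linarith
end

section
/- Let K be an n×n real symmetric positive semidefinite matrix and C̄ ∈ R^{n×c} any matrix. Then tr(C̄† K C̄) ≤ tr(K); consequently, if rank(C̄) < n, the spectral shifting term δ^{ss} = (tr(K) − tr(C̄† K C̄))/(n − rank(C̄)) is nonnegative, and if moreover K is positive definite (of full rank n) then δ^{ss} > 0. -/
open Matrix BigOperators
open scoped Classical

lemma colDot {n : ℕ} (K Q : Matrix (Fin n) (Fin n) ℝ) (j : Fin n) :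
    (Qᵀ * K * Q) j j = (fun i => Q i j) ⬝ᵥ (K *ᵥ fun i => Q i j) := by
  simp only [Matrix.mul_apply, Matrix.mulVec, dotProduct, Matrix.transpose_apply,
    Finset.sum_mul, Finset.mul_sum]
  rw [Finset.sum_comm]
  exact Finset.sum_congr rfl fun x _ => Finset.sum_congr rfl fun i _ => by ring

lemma trace_conj_nonneg {n : ℕ} {K : Matrix (Fin n) (Fin n) ℝ} (hK : K.PosSemidef)
    (Q : Matrix (Fin n) (Fin n) ℝ) : 0 ≤ (Qᵀ * K * Q).trace := by
  rw [Matrix.trace]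
  refine Finset.sum_nonneg fun j _ => ?_
  have := hK.dotProduct_mulVec_nonneg (fun i => Q i j)
  simpa [Matrix.diag, colDot K Q j, star] using this

lemma trace_conj_pos {n : ℕ} {K : Matrix (Fin n) (Fin n) ℝ} (hK : K.PosDef)
    {Q : Matrix (Fin n) (Fin n) ℝ} (hQ : Q ≠ 0) : 0 < (Qᵀ * K * Q).trace := by
  obtain ⟨i0, j0, hij⟩ : ∃ i j, Q i j ≠ 0 := by
    by_contra h; push_neg at h; exact hQ (by ext i j; simp [h])
  rw [Matrix.trace]
  refine Finset.sum_pos' (fun j _ => ?_) ⟨j0, Finset.mem_univ _, ?_⟩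
  · have := hK.posSemidef.dotProduct_mulVec_nonneg (fun i => Q i j)
    simpa [Matrix.diag, colDot K Q j, star] using this
  · have := hK.dotProduct_mulVec_pos (x := fun i => Q i j0) (by intro h; exact hij (congrFun h i0))
    simpa [Matrix.diag, colDot K Q j0, star] using this

/-- `tr(C̄† K C̄) ≤ tr(K)`; hence the spectral shifting term is
nonnegative, and positive when `K` is positive definite. -/
theorem spectral_shifting_term_nonneg {n c : ℕ}
    (K : Matrix (Fin n) (Fin n) ℝ) (hK : K.PosSemidef)
    (Cbar : Matrix (Fin n) (Fin c) ℝ) :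
    (pinv Cbar * K * Cbar).trace ≤ K.trace ∧
      (Cbar.rank < n →
        0 ≤ (K.trace - (pinv Cbar * K * Cbar).trace) / ((n : ℝ) - Cbar.rank)) ∧
      (Cbar.rank < n → K.PosDef →
        0 < (K.trace - (pinv Cbar * K * Cbar).trace) / ((n : ℝ) - Cbar.rank)) := by
  obtain ⟨P, hPt, hPP, hPr, htr⟩ :
      ∃ P : Matrix (Fin n) (Fin n) ℝ, Pᵀ = P ∧ P * P = P ∧ P.rank ≤ Cbar.rank ∧
        (pinv Cbar * K * Cbar).trace = (K * P).trace := by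
    by_cases h : ∃ B, IsMoorePenrose Cbar B
    · obtain ⟨h1, h2, h3, h4⟩ := h.choose_spec
      have hB : pinv Cbar = h.choose := dif_pos h
      refine ⟨Cbar * h.choose, h3, ?_, Matrix.rank_mul_le_left _ _, ?_⟩
      · calc Cbar * h.choose * (Cbar * h.choose)
            = Cbar * h.choose * Cbar * h.choose := by rw [← Matrix.mul_assoc]
          _ = Cbar * h.choose := by rw [h1]
      · rw [hB, Matrix.trace_mul_comm, ← Matrix.mul_assoc, Matrix.trace_mul_comm]
    · have hB : pinv Cbar = 0 := dif_neg h
      exact ⟨0, by simp, by simp, by simp [Matrix.rank_zero], by simp [hB]⟩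
  set Q : Matrix (Fin n) (Fin n) ℝ := 1 - P with hQdef
  have hQt : Qᵀ = Q := by simp [hQdef, Matrix.transpose_sub, hPt]
  have hQQ : Q * Q = Q := by
    simp only [hQdef, Matrix.sub_mul, Matrix.mul_sub, Matrix.one_mul, Matrix.mul_one, hPP]
    abel
  have hKeyEq : K.trace - (pinv Cbar * K * Cbar).trace = (Qᵀ * K * Q).trace := by
    have h1 : (Qᵀ * K * Q).trace = (K * Q).trace := by
      rw [hQt, mul_assoc, Matrix.trace_mul_comm, mul_assoc, hQQ]
    rw [h1, htr, hQdef, Matrix.mul_sub, Matrix.mul_one, Matrix.trace_sub]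
  have hle : (pinv Cbar * K * Cbar).trace ≤ K.trace := by
    have := trace_conj_nonneg hK Q
    linarith [hKeyEq ▸ this]
  refine ⟨hle, fun hr => ?_, fun hr hKpd => ?_⟩
  · apply div_nonneg (by linarith)
    have : (Cbar.rank : ℝ) < n := by exact_mod_cast hr
    linarith
  · have hQne : Q ≠ 0 := by
      intro h0
      have hP1 : P = 1 := by
        have := sub_eq_zero.mp h0
        simp [hQdef, sub_eq_zero] at h0
        exact h0.symm
      rw [hP1] at hPr
      rw [Matrix.rank_one] at hPr
      simp at hPr
      omega
    have hpos := trace_conj_pos hKpd hQne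
    apply div_pos (by linarith [hKeyEq ▸ hpos])
    have : (Cbar.rank : ℝ) < n := by exact_mod_cast hr
    linarith
end
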